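/- arXiv:1807.11865 — 5 statements merged into one kernel-verified Lean document; each statement's English description precedes it below -/
import Mathlib

section
/- Let σ be a positive Borel measure on ℝ with ∫ dσ(t)/(1+t²) < ∞, and let z ∈ L²(ℝ, dσ). If there exists a constant c ∈ ℂ such that ∫ z(t)/(t − λ) dσ(t) = c for all λ ∈ ℂ \ ℝ, then z(t) = 0 for σ-almost every t (and consequently c = 0 if σ ≠ 0, and c = 0 in general since the integral vanishes). -/
open MeasureTheory Complex Filter Topology

section StieltjesPerronAux

lemma sp_key_ineq (t x y M : ℝ) (h2 : 2 ≤ M) (hx : 1 + 2*x^2 ≤ M*y^2) :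
    1 + t^2 ≤ M * ((t-x)^2 + y^2) := by
  nlinarith [sq_nonneg (t - 2*x), sq_nonneg (t - x),
    mul_nonneg (by linarith : (0:ℝ) ≤ M - 2) (sq_nonneg (t-x))]

lemma sp_inv_ker_le (t x y M : ℝ) (hy : y ≠ 0) (h2 : 2 ≤ M) (hx : 1 + 2*x^2 ≤ M*y^2) :
    ((t-x)^2 + y^2)⁻¹ ≤ M * (1+t^2)⁻¹ := by
  have him : 0 < y^2 := lt_of_le_of_ne (sq_nonneg _) (Ne.symm (pow_ne_zero 2 hy))
  have ha : 0 < (t-x)^2 + y^2 := add_pos_of_nonneg_of_pos (sq_nonneg _) him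
  have h2t : (0:ℝ) < 1 + t^2 := by positivity
  have key := sp_key_ineq t x y M h2 hx
  rw [show M * (1+t^2)⁻¹ = M / (1+t^2) from (div_eq_mul_inv _ _).symm, ← one_div,
    div_le_div_iff₀ ha h2t]
  nlinarith [key]

variable {σ : Measure ℝ}

lemma sp_memL2_of_bound {E : Type*} [NormedAddCommGroup E]
    (hσ : Integrable (fun t : ℝ => (1 + t ^ 2)⁻¹) σ)
    {h : ℝ → E} (hm : AEStronglyMeasurable h σ) (M : ℝ)
    (hb : ∀ t, ‖h t‖^2 ≤ M * (1+t^2)⁻¹) : MemLp h 2 σ := by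
  rw [memLp_two_iff_integrable_sq_norm hm]
  refine (hσ.const_mul M).mono' ?_ (ae_of_all _ fun t => ?_)
  · simpa [pow_two, Pi.mul_def] using hm.norm.mul hm.norm
  · rw [Real.norm_of_nonneg (by positivity)]
    exact hb t

lemma sp_integrable_mul_L2 {A : Type*} [NormedRing A] {f g : ℝ → A}
    (hf : MemLp f 2 σ) (hg : MemLp g 2 σ) :
    Integrable (fun t => f t * g t) σ := by
  refine ((hf.norm.integrable_sq.add hg.norm.integrable_sq).const_mul (1/2 : ℝ)).mono'
    (hf.aestronglyMeasurable.mul hg.aestronglyMeasurable) (ae_of_all _ fun t => ?_)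
  calc ‖f t * g t‖ ≤ ‖f t‖ * ‖g t‖ := norm_mul_le _ _
    _ ≤ 1/2 * (‖f t‖^2 + ‖g t‖^2) := by nlinarith [sq_nonneg (‖f t‖ - ‖g t‖)]

lemma sp_cauchyKer_ne (lam : ℂ) (hl : lam.im ≠ 0) (t : ℝ) : (t:ℂ) - lam ≠ 0 := by
  intro h
  rw [sub_eq_zero] at h
  exact hl (by rw [← h]; exact Complex.ofReal_im t)

lemma sp_cauchyKer_cont (lam : ℂ) (hl : lam.im ≠ 0) :
    Continuous (fun t : ℝ => ((t:ℂ) - lam)⁻¹) :=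
  (Complex.continuous_ofReal.sub continuous_const).inv₀ (sp_cauchyKer_ne lam hl)

lemma sp_cauchyKer_memL2 (hσ : Integrable (fun t : ℝ => (1 + t ^ 2)⁻¹) σ)
    (lam : ℂ) (hl : lam.im ≠ 0) :
    MemLp (fun t : ℝ => ((t:ℂ) - lam)⁻¹) 2 σ := by
  have him : 0 < lam.im^2 := lt_of_le_of_ne (sq_nonneg _) (Ne.symm (pow_ne_zero 2 hl))
  set M : ℝ := max 2 ((1 + 2*lam.re^2)/lam.im^2) with hM
  refine sp_memL2_of_bound hσ (sp_cauchyKer_cont lam hl).aestronglyMeasurable M (fun t => ?_)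
  have hnorm : ‖((t:ℂ) - lam)⁻¹‖^2 = ((t - lam.re)^2 + lam.im^2)⁻¹ := by
    rw [norm_inv, inv_pow]
    congr 1
    rw [Complex.sq_norm, Complex.normSq_apply]
    simp only [Complex.sub_re, Complex.sub_im, Complex.ofReal_re, Complex.ofReal_im]
    ring
  rw [hnorm]
  exact sp_inv_ker_le t lam.re lam.im M hl (le_max_left _ _)
    ((div_le_iff₀ him).mp (le_max_right _ _))

/-- Change of variables form for the Poisson-type kernel. -/
lemma sp_Kform (g : ℝ → ℝ) (ε t : ℝ) (hε : 0 < ε) :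
    ∫ u, g (t + ε*u) * (1+u^2)⁻¹ = ε * ∫ x, g x * ((t-x)^2+ε^2)⁻¹ := by
  set f : ℝ → ℝ := fun x => g x * ((t - x)^2 + ε^2)⁻¹ with hf
  have h1 : (∫ u, f (t + ε*u)) = |ε⁻¹| • ∫ x, f (t + x) :=
    Measure.integral_comp_mul_left (fun x => f (t + x)) ε
  have h2 : (∫ x : ℝ, f (t + x)) = ∫ x, f x := integral_add_left_eq_self f t
  have h3 : ∀ u : ℝ, g (t + ε*u) * (1+u^2)⁻¹ = ε^2 * f (t + ε*u) := by
    intro u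
    simp only [hf]
    rw [show (t - (t + ε*u)) = -(ε*u) by ring, neg_sq]
    have h4 : (ε*u)^2 + ε^2 = ε^2 * (1 + u^2) := by ring
    rw [h4, mul_inv]
    have : (ε^2)⁻¹ * ε^2 = 1 := inv_mul_cancel₀ (by positivity)
    field_simp
  calc ∫ u, g (t + ε*u) * (1+u^2)⁻¹ = ∫ u, ε^2 * f (t + ε*u) := by
        congr 1; funext u; exact h3 u
    _ = ε^2 * ∫ u, f (t + ε*u) := integral_const_mul _ _
    _ = ε^2 * (ε⁻¹ * ∫ x, f x) := by
        rw [h1, h2, abs_of_pos (inv_pos.2 hε), smul_eq_mul]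
    _ = ε * ∫ x, f x := by field_simp

lemma sp_Kcont (g : ℝ → ℝ) (hgc : Continuous g) (Cg : ℝ) (hCg : ∀ x, ‖g x‖ ≤ Cg) (ε : ℝ) :
    Continuous (fun t : ℝ => ∫ u, g (t + ε*u) * (1+u^2)⁻¹) := by
  have hinv : Continuous (fun u : ℝ => (1+u^2)⁻¹) :=
    (continuous_const.add (continuous_pow 2)).inv₀ (fun u => by simp only [Pi.add_apply]; positivity)
  apply continuous_of_dominated (bound := fun u : ℝ => Cg * (1+u^2)⁻¹)
  · intro t
    exact ((hgc.comp (continuous_const.add (continuous_const.mul continuous_id))).mul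
      hinv).aestronglyMeasurable
  · intro t
    refine ae_of_all _ fun u => ?_
    rw [norm_mul, Real.norm_of_nonneg (by positivity : (0:ℝ) ≤ (1+u^2)⁻¹)]
    exact mul_le_mul_of_nonneg_right (hCg _) (by positivity)
  · exact integrable_inv_one_add_sq.const_mul Cg
  · refine ae_of_all _ fun u => ?_
    exact (hgc.comp (continuous_id.add continuous_const)).mul continuous_const

lemma sp_Klim (g : ℝ → ℝ) (hgc : Continuous g) (Cg : ℝ) (hCg : ∀ x, ‖g x‖ ≤ Cg) (t : ℝ) :
    Tendsto (fun n : ℕ => ∫ u, g (t + ((n:ℝ)+1)⁻¹*u) * (1+u^2)⁻¹) atTop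
      (𝓝 (Real.pi * g t)) := by
  have hπ : ∫ u : ℝ, g t * (1+u^2)⁻¹ = Real.pi * g t := by
    rw [integral_const_mul, integral_univ_inv_one_add_sq]; ring
  rw [← hπ]
  apply tendsto_integral_of_dominated_convergence (fun u : ℝ => Cg * (1+u^2)⁻¹)
  · intro n
    exact ((hgc.comp (continuous_const.add (continuous_const.mul continuous_id))).mul
      ((continuous_const.add (continuous_pow 2)).inv₀ (fun u => by simp only [Pi.add_apply]; positivity))).aestronglyMeasurable
  · exact integrable_inv_one_add_sq.const_mul Cg
  · intro n
    refine ae_of_all _ fun u => ?_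
    rw [norm_mul, Real.norm_of_nonneg (by positivity : (0:ℝ) ≤ (1+u^2)⁻¹)]
    exact mul_le_mul_of_nonneg_right (hCg _) (by positivity)
  · refine ae_of_all _ fun u => ?_
    apply Tendsto.mul_const
    have h0 : Tendsto (fun n : ℕ => ((n:ℝ)+1)⁻¹) atTop (𝓝 0) := by
      simpa only [one_div] using tendsto_one_div_add_atTop_nhds_zero_nat (𝕜 := ℝ)
    have h2 : Tendsto (fun n : ℕ => t + ((n:ℝ)+1)⁻¹ * u) atTop (𝓝 (t + 0*u)) :=
      tendsto_const_nhds.add (h0.mul_const u)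
    rw [zero_mul, add_zero] at h2
    exact (hgc.tendsto t).comp h2

lemma sp_locallyFinite (hσ : Integrable (fun t : ℝ => (1 + t ^ 2)⁻¹) σ) :
    IsLocallyFiniteMeasure σ := by
  constructor
  intro x
  refine ⟨Metric.ball x 1, Metric.ball_mem_nhds x one_pos, ?_⟩
  set cp : ℝ := (1 + (|x|+1)^2)⁻¹ with hcdef
  have hc1 : 0 < cp := by positivity
  have hmono : ∫⁻ t in Metric.ball x 1, ENNReal.ofReal cp ∂σ ≤
      ∫⁻ t, ENNReal.ofReal ((1+t^2)⁻¹) ∂σ := by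
    refine le_trans (setLIntegral_mono ?_ ?_) (setLIntegral_le_lintegral _ _)
    · exact ENNReal.measurable_ofReal.comp
        ((continuous_const.add (continuous_pow 2)).inv₀ (fun t => by simp only [Pi.add_apply]; positivity)).measurable
    · intro t ht
      apply ENNReal.ofReal_le_ofReal
      have htx : |t - x| < 1 := by
        simpa [Real.dist_eq] using ht
      have habs : |t| ≤ |x| + 1 := by
        have := abs_sub_abs_le_abs_sub t x
        linarith
      have ht2 : t^2 ≤ (|x|+1)^2 := by
        have h0 : (0:ℝ) ≤ |x| + 1 := by positivity
        nlinarith [_root_.sq_abs t, abs_nonneg t]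
      exact inv_anti₀ (by positivity) (by linarith)
  rw [setLIntegral_const] at hmono
  have hfin := hσ.lintegral_lt_top
  by_contra hinf
  rw [not_lt, top_le_iff] at hinf
  rw [hinf, ENNReal.mul_top (ENNReal.ofReal_pos.2 hc1).ne'] at hmono
  exact hfin.ne (top_le_iff.mp hmono)

/-- The main density step. -/
lemma sp_main_density (hσ : Integrable (fun t : ℝ => (1 + t ^ 2)⁻¹) σ)
    (z : Lp ℂ 2 σ)
    (hE1 : ∀ lam : ℂ, lam.im ≠ 0 → ∫ t : ℝ, z t * ((t:ℂ) - lam)⁻¹ ∂σ = 0)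
    {g : ℝ → ℝ} (hgc : Continuous g) (hsupp : HasCompactSupport g) :
    ∫ t : ℝ, z t * (g t : ℂ) ∂σ = 0 := by
  haveI : IsLocallyFiniteMeasure σ := sp_locallyFinite hσ
  haveI : SigmaFinite σ := sigmaFinite_of_locallyFinite
  -- support radius
  obtain ⟨R₀, hR₀⟩ := hsupp.isCompact.isBounded.subset_closedBall 0
  set R : ℝ := max R₀ 1 with hRdef
  have hR1 : (1:ℝ) ≤ R := le_max_right _ _
  have hRsupp : tsupport g ⊆ Metric.closedBall 0 R :=
    hR₀.trans (Metric.closedBall_subset_closedBall (le_max_left _ _))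
  have hxR : ∀ x : ℝ, g x ≠ 0 → |x| ≤ R := by
    intro x hx
    have hmem : x ∈ tsupport g := subset_tsupport g hx
    have := hRsupp hmem
    simpa [Real.dist_eq] using this
  obtain ⟨Cg, hCg⟩ := hsupp.exists_bound_of_continuous hgc
  have hCg0 : 0 ≤ Cg := le_trans (norm_nonneg (g 0)) (hCg 0)
  have hgint : Integrable g := hgc.integrable_of_hasCompactSupport hsupp
  set Ig : ℝ := ∫ x, ‖g x‖ with hIg
  have hIg0 : 0 ≤ Ig := integral_nonneg (fun x => norm_nonneg _)
  have hzmes : StronglyMeasurable (⇑z) := Lp.stronglyMeasurable z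
  have hz2 : MemLp (⇑z) 2 σ := Lp.memLp z
  -- Step C : vanishing against the Poisson-type kernel
  have hC : ∀ (x ε : ℝ), 0 < ε →
      ∫ t : ℝ, z t * ((((t - x)^2 + ε^2 : ℝ) : ℂ))⁻¹ ∂σ = 0 := by
    intro x ε hε
    set l1 : ℂ := (x:ℂ) + (ε:ℂ)*I with hl1def
    set l2 : ℂ := (x:ℂ) - (ε:ℂ)*I with hl2def
    have hl1 : l1.im ≠ 0 := by simp [hl1def, hε.ne']
    have hl2 : l2.im ≠ 0 := by simp [hl2def, hε.ne']
    have hi1 : Integrable (fun t : ℝ => z t * ((t:ℂ) - l1)⁻¹) σ :=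
      sp_integrable_mul_L2 hz2 (sp_cauchyKer_memL2 hσ l1 hl1)
    have hi2 : Integrable (fun t : ℝ => z t * ((t:ℂ) - l2)⁻¹) σ :=
      sp_integrable_mul_L2 hz2 (sp_cauchyKer_memL2 hσ l2 hl2)
    have hid : ∀ t : ℝ, z t * ((t:ℂ) - l1)⁻¹ - z t * ((t:ℂ) - l2)⁻¹
        = (2*(ε:ℂ)*I) * (z t * ((((t - x)^2 + ε^2 : ℝ) : ℂ))⁻¹) := by
      intro t
      have h1 := sp_cauchyKer_ne l1 hl1 t
      have h2 := sp_cauchyKer_ne l2 hl2 t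
      have h3 : ((((t - x)^2 + ε^2 : ℝ)) : ℂ) ≠ 0 := by
        rw [Complex.ofReal_ne_zero]; positivity
      have hprod : ((t:ℂ) - l1) * ((t:ℂ) - l2) = ((((t - x)^2 + ε^2 : ℝ)) : ℂ) := by
        simp only [hl1def, hl2def]
        push_cast
        rw [show ((t:ℂ) - (x + ε*I)) * ((t:ℂ) - (x - ε*I))
            = ((t:ℂ)-x)^2 - (ε*I)^2 by ring]
        rw [mul_pow, Complex.I_sq]
        ring
      have hkey : ((t:ℂ) - l1)⁻¹ - ((t:ℂ) - l2)⁻¹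
          = (2*(ε:ℂ)*I) * ((((t - x)^2 + ε^2 : ℝ)) : ℂ)⁻¹ := by
        rw [← hprod]
        field_simp
        simp only [hl1def, hl2def]
        ring
      rw [← mul_sub, hkey]
      ring
    have h0 : ∫ t : ℝ, (z t * ((t:ℂ) - l1)⁻¹ - z t * ((t:ℂ) - l2)⁻¹) ∂σ = 0 := by
      rw [integral_sub hi1 hi2, hE1 l1 hl1, hE1 l2 hl2, sub_zero]
    simp_rw [hid] at h0
    rw [integral_const_mul] at h0
    have h2εI : (2*(ε:ℂ)*I) ≠ 0 :=
      mul_ne_zero (mul_ne_zero two_ne_zero (Complex.ofReal_ne_zero.2 hε.ne')) Complex.I_ne_zero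
    exact (mul_eq_zero.mp h0).resolve_left h2εI
  -- Step D (Fubini) : vanishing against the smeared kernel
  have hJ : ∀ ε : ℝ, 0 < ε →
      ∫ t : ℝ, z t * (((∫ x, g x * ((t - x)^2 + ε^2)⁻¹ : ℝ)) : ℂ) ∂σ = 0 := by
    intro ε hε
    set M : ℝ := max 2 ((1 + 2*R^2)/ε^2) with hMdef
    have hM2 : (2:ℝ) ≤ M := le_max_left _ _
    have hM0 : (0:ℝ) ≤ M := by linarith
    have hMx : ∀ x : ℝ, |x| ≤ R → 1 + 2*x^2 ≤ M * ε^2 := by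
      intro x hx
      have hε2 : (0:ℝ) < ε^2 := by positivity
      have h1 := (div_le_iff₀ hε2).mp (le_max_right 2 ((1 + 2*R^2)/ε^2))
      have hx2 : x^2 ≤ R^2 := by nlinarith [_root_.sq_abs x, abs_nonneg x]
      nlinarith
    set f₂ : ℝ → ℝ → ℂ :=
      fun t x => z t * ((g x * ((t - x)^2 + ε^2)⁻¹ : ℝ) : ℂ) with hf₂
    have hker_cont : Continuous (fun p : ℝ × ℝ => ((p.1 - p.2)^2 + ε^2)⁻¹) := by
      apply Continuous.inv₀
      · fun_prop
      · intro p; positivity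
    have hFmeas : AEStronglyMeasurable (Function.uncurry f₂) (σ.prod volume) := by
      apply AEStronglyMeasurable.mul
      · exact (hzmes.comp_measurable measurable_fst).aestronglyMeasurable
      · exact (Complex.continuous_ofReal.comp
          ((hgc.comp continuous_snd).mul hker_cont)).aestronglyMeasurable
    have hbound_int : Integrable
        (fun p : ℝ × ℝ => (‖z p.1‖ * (M * (1+p.1^2)⁻¹)) * ‖g p.2‖) (σ.prod volume) := by
      have hb1 : Integrable (fun t : ℝ => ‖z t‖ * (M * (1+t^2)⁻¹)) σ := by
        apply sp_integrable_mul_L2 (σ := σ) hz2.norm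
        apply sp_memL2_of_bound hσ
          ((continuous_const.mul
            ((continuous_const.add (continuous_pow 2)).inv₀
              (fun t => by simp only [Pi.add_apply]; positivity))).aestronglyMeasurable) (M^2)
        intro t
        rw [Real.norm_eq_abs, sq_abs]
        have hi0 : (0:ℝ) ≤ (1+t^2)⁻¹ := by positivity
        have hi1 : (1+t^2)⁻¹ ≤ 1 := inv_le_one_of_one_le₀ (by nlinarith [sq_nonneg t])
        calc (M*(1+t^2)⁻¹)^2 = M^2 * ((1+t^2)⁻¹ * (1+t^2)⁻¹) := by ring
          _ ≤ M^2 * (1+t^2)⁻¹ :=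
            mul_le_mul_of_nonneg_left (mul_le_of_le_one_right hi0 hi1) (sq_nonneg M)
      exact hb1.mul_prod hgint.norm
    have hFint : Integrable (Function.uncurry f₂) (σ.prod volume) := by
      refine hbound_int.mono' hFmeas (ae_of_all _ fun p => ?_)
      obtain ⟨t, x⟩ := p
      have hnorm : ‖Function.uncurry f₂ (t, x)‖ = ‖z t‖ * (|g x| * ((t-x)^2+ε^2)⁻¹) := by
        simp only [Function.uncurry, hf₂, norm_mul, Complex.norm_real, Real.norm_eq_abs,
          abs_mul, _root_.abs_of_nonneg (by positivity : (0:ℝ) ≤ ((t-x)^2+ε^2)⁻¹)]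
      rw [hnorm]
      by_cases hx : g x = 0
      · simp only [hx, abs_zero, zero_mul, mul_zero]
        positivity
      · have hxR' := hxR x hx
        have hkk : ((t-x)^2+ε^2)⁻¹ ≤ M * (1+t^2)⁻¹ :=
          sp_inv_ker_le t x ε M hε.ne' hM2 (hMx x hxR')
        calc ‖z t‖ * (|g x| * ((t-x)^2+ε^2)⁻¹)
            ≤ ‖z t‖ * (|g x| * (M * (1+t^2)⁻¹)) := by
              apply mul_le_mul_of_nonneg_left ?_ (norm_nonneg _)
              exact mul_le_mul_of_nonneg_left hkk (abs_nonneg _)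
          _ = ‖z t‖ * (M * (1+t^2)⁻¹) * |g x| := by ring
    have hswap := integral_integral_swap hFint
    have hrhs : ∫ x, ∫ t, f₂ t x ∂σ = 0 := by
      have hx0 : ∀ x : ℝ, ∫ t, f₂ t x ∂σ = 0 := by
        intro x
        have hre : ∀ t : ℝ, f₂ t x
            = (g x : ℂ) * (z t * ((((t - x)^2 + ε^2 : ℝ)) : ℂ)⁻¹) := by
          intro t
          simp only [hf₂]
          push_cast
          ring
        simp_rw [hre, integral_const_mul, hC x ε hε, mul_zero]
      simp [hx0]
    have hlhs : ∀ t : ℝ, (∫ x, f₂ t x)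
        = z t * (((∫ x, g x * ((t - x)^2 + ε^2)⁻¹ : ℝ)) : ℂ) := by
      intro t
      simp only [hf₂]
      rw [integral_const_mul]
      congr 1
      exact integral_ofReal
    calc ∫ t : ℝ, z t * (((∫ x, g x * ((t - x)^2 + ε^2)⁻¹ : ℝ)) : ℂ) ∂σ
        = ∫ t : ℝ, ∫ x, f₂ t x ∂(volume) ∂σ := by
          congr 1; funext t; exact (hlhs t).symm
      _ = ∫ x, ∫ t, f₂ t x ∂σ := hswap
      _ = 0 := hrhs
  -- Step E : vanishing against the mollified function, limits
  have hKzero : ∀ n : ℕ,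
      ∫ t : ℝ, z t * (((∫ u, g (t + ((n:ℝ)+1)⁻¹*u) * (1+u^2)⁻¹ : ℝ)) : ℂ) ∂σ = 0 := by
    intro n
    have hε : (0:ℝ) < ((n:ℝ)+1)⁻¹ := by positivity
    have hJn := hJ _ hε
    calc ∫ t : ℝ, z t * (((∫ u, g (t + ((n:ℝ)+1)⁻¹*u) * (1+u^2)⁻¹ : ℝ)) : ℂ) ∂σ
        = ∫ t : ℝ, ((((n:ℝ)+1)⁻¹ : ℝ) : ℂ) *
            (z t * (((∫ x, g x * ((t - x)^2 + (((n:ℝ)+1)⁻¹)^2)⁻¹ : ℝ)) : ℂ)) ∂σ := by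
          congr 1; funext t
          rw [sp_Kform g _ t hε]
          push_cast
          ring
      _ = 0 := by rw [integral_const_mul, hJn, mul_zero]
  -- uniform bound on the mollified kernel
  set C : ℝ := max (Cg * Real.pi * (2*R+2)) Ig with hCdef
  have hKbound : ∀ n : ℕ, ∀ t : ℝ,
      |∫ u, g (t + ((n:ℝ)+1)⁻¹*u) * (1+u^2)⁻¹| ≤ C * (1+|t|)⁻¹ := by
    intro n t
    set ε : ℝ := ((n:ℝ)+1)⁻¹ with hεdef
    have hε : 0 < ε := by positivity
    have htpos : (0:ℝ) < 1 + |t| := by positivity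
    by_cases hcase : |t| ≤ 2*R+1
    · have h1 : |∫ u, g (t + ε*u) * (1+u^2)⁻¹| ≤ Cg * Real.pi := by
        rw [← Real.norm_eq_abs]
        calc ‖∫ u, g (t + ε*u) * (1+u^2)⁻¹‖ ≤ ∫ u, Cg * (1+u^2)⁻¹ := by
              apply norm_integral_le_of_norm_le (integrable_inv_one_add_sq.const_mul Cg)
              refine ae_of_all _ fun u => ?_
              rw [norm_mul, Real.norm_of_nonneg (by positivity : (0:ℝ) ≤ (1+u^2)⁻¹)]
              exact mul_le_mul_of_nonneg_right (hCg _) (by positivity)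
          _ = Cg * Real.pi := by rw [integral_const_mul, integral_univ_inv_one_add_sq]
      have h2 : Cg * Real.pi * (1+|t|) ≤ C := by
        calc Cg * Real.pi * (1+|t|) ≤ Cg * Real.pi * (2*R+2) := by
              apply mul_le_mul_of_nonneg_left (by linarith)
                (by positivity)
          _ ≤ C := le_max_left _ _
      calc |∫ u, g (t + ε*u) * (1+u^2)⁻¹| ≤ Cg * Real.pi := h1
        _ ≤ C * (1+|t|)⁻¹ := by
            rw [show C * (1+|t|)⁻¹ = C/(1+|t|) from (div_eq_mul_inv _ _).symm,
              le_div_iff₀ htpos]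
            exact h2
    · push_neg at hcase
      have hpos2 : (0:ℝ) < |t| - R := by linarith
      have hdist : ∀ x : ℝ, g x ≠ 0 → |t| - R ≤ |t - x| := by
        intro x hx
        have h1 := hxR x hx
        have h2 := abs_sub_abs_le_abs_sub t x
        linarith
      have hptw : ∀ x : ℝ, ‖g x * ((t-x)^2+ε^2)⁻¹‖ ≤ ‖g x‖ * (2*ε*(|t|-R))⁻¹ := by
        intro x
        rw [norm_mul]
        by_cases hx : g x = 0
        · simp [hx]
        · apply mul_le_mul_of_nonneg_left ?_ (norm_nonneg _)
          rw [Real.norm_of_nonneg (by positivity : (0:ℝ) ≤ ((t-x)^2+ε^2)⁻¹)]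
          apply inv_anti₀ (by positivity)
          have h1 := hdist x hx
          nlinarith [sq_nonneg (|t - x| - ε), _root_.sq_abs (t - x)]
      have h1 : |∫ x, g x * ((t-x)^2+ε^2)⁻¹| ≤ Ig * (2*ε*(|t|-R))⁻¹ := by
        rw [← Real.norm_eq_abs]
        calc ‖∫ x, g x * ((t-x)^2+ε^2)⁻¹‖ ≤ ∫ x, ‖g x‖ * (2*ε*(|t|-R))⁻¹ :=
              norm_integral_le_of_norm_le (hgint.norm.mul_const _) (ae_of_all _ hptw)
          _ = Ig * (2*ε*(|t|-R))⁻¹ := by rw [integral_mul_const]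
      have h2 : |∫ u, g (t + ε*u) * (1+u^2)⁻¹| ≤ ε * (Ig * (2*ε*(|t|-R))⁻¹) := by
        rw [sp_Kform g ε t hε, abs_mul, abs_of_pos hε]
        exact mul_le_mul_of_nonneg_left h1 hε.le
      have h3 : ε * (Ig * (2*ε*(|t|-R))⁻¹) = Ig * (2*(|t|-R))⁻¹ := by
        rw [show 2*ε*(|t|-R) = ε * (2*(|t|-R)) by ring, mul_inv]
        field_simp
      rw [h3] at h2
      calc |∫ u, g (t + ε*u) * (1+u^2)⁻¹| ≤ Ig * (2*(|t|-R))⁻¹ := h2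
        _ ≤ Ig * (1+|t|)⁻¹ := by
            apply mul_le_mul_of_nonneg_left ?_ hIg0
            exact inv_anti₀ htpos (by linarith)
        _ ≤ C * (1+|t|)⁻¹ := mul_le_mul_of_nonneg_right (le_max_right _ _) (by positivity)
  have hC0 : 0 ≤ C := le_trans hIg0 (le_max_right _ _)
  -- final dominated convergence
  have hfinal : Tendsto
      (fun n : ℕ => ∫ t : ℝ, z t * (((∫ u, g (t + ((n:ℝ)+1)⁻¹*u) * (1+u^2)⁻¹ : ℝ)) : ℂ) ∂σ)
      atTop (𝓝 (∫ t : ℝ, z t * ((Real.pi * g t : ℝ) : ℂ) ∂σ)) := by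
    apply tendsto_integral_of_dominated_convergence (fun t => ‖z t‖ * (C * (1+|t|)⁻¹))
    · intro n
      exact (hzmes.aestronglyMeasurable).mul
        (Complex.continuous_ofReal.comp (sp_Kcont g hgc Cg hCg _)).aestronglyMeasurable
    · apply sp_integrable_mul_L2 hz2.norm
      apply sp_memL2_of_bound hσ
        ((continuous_const.mul ((continuous_const.add _root_.continuous_abs).inv₀
          (fun t => by simp only [Pi.add_apply]; positivity))).aestronglyMeasurable) (C^2)
      intro t
      rw [Real.norm_eq_abs, sq_abs]
      have h2 : (0:ℝ) < 1 + t^2 := by positivity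
      have h4 : 1 + t^2 ≤ (1+|t|)^2 := by nlinarith [abs_nonneg t, _root_.sq_abs t]
      have h5 : ((1+|t|)^2)⁻¹ ≤ (1+t^2)⁻¹ := inv_anti₀ h2 h4
      calc (C*(1+|t|)⁻¹)^2 = C^2 * ((1+|t|)^2)⁻¹ := by rw [mul_pow, ← inv_pow]
        _ ≤ C^2 * (1+t^2)⁻¹ := mul_le_mul_of_nonneg_left h5 (by positivity)
    · intro n
      refine ae_of_all _ fun t => ?_
      rw [norm_mul, Complex.norm_real, Real.norm_eq_abs]
      exact mul_le_mul_of_nonneg_left (hKbound n t) (norm_nonneg _)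
    · refine ae_of_all _ fun t => ?_
      exact Tendsto.const_mul _ ((Complex.continuous_ofReal.tendsto _).comp
        (sp_Klim g hgc Cg hCg t))
  have h0 : ∫ t : ℝ, z t * ((Real.pi * g t : ℝ) : ℂ) ∂σ = 0 := by
    rw [show (fun n : ℕ =>
        ∫ t : ℝ, z t * (((∫ u, g (t + ((n:ℝ)+1)⁻¹*u) * (1+u^2)⁻¹ : ℝ)) : ℂ) ∂σ)
      = fun _ : ℕ => (0:ℂ) from funext hKzero] at hfinal
    exact tendsto_nhds_unique hfinal tendsto_const_nhds
  have hfin : ((Real.pi : ℝ) : ℂ) * ∫ t : ℝ, z t * (g t : ℂ) ∂σ = 0 := by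
    rw [← integral_const_mul, ← h0]
    congr 1; funext t; push_cast; ring
  have hπ : ((Real.pi : ℝ) : ℂ) ≠ 0 := by
    exact_mod_cast Real.pi_ne_zero
  exact (mul_eq_zero.mp hfin).resolve_left hπ

end StieltjesPerronAux

/-- if `∫ z(t)/(t−λ) dσ(t)` is a constant `c` for all non-real `λ`, then
`z = 0` σ-a.e. and `c = 0` (Stieltjes–Perron inversion). -/
theorem stieltjes_perron_vanishing (σ : Measure ℝ)
    (hσ : Integrable (fun t : ℝ => (1 + t ^ 2)⁻¹) σ)
    (z : Lp ℂ 2 σ) (c : ℂ)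
    (hc : ∀ lam : ℂ, lam.im ≠ 0 → ∫ t : ℝ, z t / ((t : ℂ) - lam) ∂σ = c) :
    (∀ᵐ t ∂σ, z t = 0) ∧ c = 0 := by
  have hz2 : MemLp (⇑z) 2 σ := Lp.memLp z
  have hc' : ∀ lam : ℂ, lam.im ≠ 0 → ∫ t : ℝ, z t * ((t:ℂ) - lam)⁻¹ ∂σ = c := by
    intro lam hl
    rw [← hc lam hl]
    exact integral_congr_ae (ae_of_all _ fun t => (div_eq_mul_inv _ _).symm)
  have himn : ∀ n : ℕ, ((((n:ℝ)+1 : ℝ) : ℂ) * I).im ≠ 0 := by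
    intro n
    have him : ((((n:ℝ)+1 : ℝ) : ℂ) * I).im = (n:ℝ)+1 := by simp
    rw [him]
    positivity
  -- c = 0
  have hc0 : c = 0 := by
    have hlim : Tendsto
        (fun n : ℕ => ∫ t : ℝ, z t * ((t:ℂ) - (((n:ℝ)+1 : ℝ) : ℂ)*I)⁻¹ ∂σ)
        atTop (𝓝 (∫ _ : ℝ, (0:ℂ) ∂σ)) := by
      apply tendsto_integral_of_dominated_convergence
        (fun t => ‖z t‖ * ‖((t:ℂ) - I)⁻¹‖)
      · intro n
        exact (Lp.aestronglyMeasurable z).mul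
          (sp_cauchyKer_cont _ (himn n)).aestronglyMeasurable
      · exact sp_integrable_mul_L2 hz2.norm
          ((sp_cauchyKer_memL2 hσ I (by simp)).norm)
      · intro n
        refine ae_of_all _ fun t => ?_
        rw [norm_mul]
        apply mul_le_mul_of_nonneg_left ?_ (norm_nonneg _)
        rw [norm_inv, norm_inv]
        apply inv_anti₀
        · have := Complex.abs_im_le_norm ((t:ℂ) - I)
          simp only [Complex.sub_im, Complex.ofReal_im, Complex.I_im, zero_sub, abs_neg,
            abs_one] at this
          linarith
        · rw [Complex.norm_def, Complex.norm_def]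
          apply Real.sqrt_le_sqrt
          simp only [Complex.normSq_apply, Complex.sub_re, Complex.sub_im, Complex.ofReal_re,
            Complex.ofReal_im, Complex.I_re, Complex.I_im, Complex.mul_re, Complex.mul_im,
            mul_one, mul_zero, add_zero, zero_sub, sub_zero, zero_mul]
          have h1 : (1:ℝ) ≤ ((n:ℝ)+1) := by have := Nat.cast_nonneg (α := ℝ) n; linarith
          nlinarith
      · refine ae_of_all _ fun t => ?_
        apply squeeze_zero_norm (a := fun n : ℕ => ‖z t‖ * ((n:ℝ)+1)⁻¹)
        · intro n
          rw [norm_mul]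
          refine mul_le_mul_of_nonneg_left ?_ (norm_nonneg _)
          rw [norm_inv]
          have hb : ((n:ℝ)+1) ≤ ‖(t:ℂ) - (((n:ℝ)+1 : ℝ) : ℂ)*I‖ := by
            have h := Complex.abs_im_le_norm ((t:ℂ) - (((n:ℝ)+1 : ℝ) : ℂ)*I)
            simp only [Complex.sub_im, Complex.ofReal_im, Complex.mul_im, Complex.ofReal_re,
              Complex.I_im, Complex.I_re, mul_one, mul_zero, add_zero, zero_sub, abs_neg] at h
            rwa [abs_of_pos (by positivity : (0:ℝ) < (n:ℝ)+1)] at h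
          exact inv_anti₀ (by positivity) hb
        · have h0 : Tendsto (fun n : ℕ => ((n:ℝ)+1)⁻¹) atTop (𝓝 0) := by
            simpa only [one_div] using tendsto_one_div_add_atTop_nhds_zero_nat (𝕜 := ℝ)
          simpa using h0.const_mul ‖z t‖
    rw [show (fun n : ℕ => ∫ t : ℝ, z t * ((t:ℂ) - (((n:ℝ)+1 : ℝ) : ℂ)*I)⁻¹ ∂σ)
        = fun _ : ℕ => c from funext (fun n => hc' _ (himn n))] at hlim
    simpa using (tendsto_nhds_unique hlim tendsto_const_nhds).symm
  have hE1 : ∀ lam : ℂ, lam.im ≠ 0 → ∫ t : ℝ, z t * ((t:ℂ) - lam)⁻¹ ∂σ = 0 :=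
    fun lam hl => (hc' lam hl).trans hc0
  haveI : IsLocallyFiniteMeasure σ := sp_locallyFinite hσ
  have hz0 : ∀ᵐ t ∂σ, z t = 0 := by
    have hloc : LocallyIntegrable (⇑z) σ := hz2.locallyIntegrable one_le_two
    apply ae_eq_zero_of_integral_contDiff_smul_eq_zero hloc
    intro g hg hgsupp
    have hmd := sp_main_density hσ z hE1 hg.continuous hgsupp
    rw [← hmd]
    congr 1; funext x
    rw [Complex.real_smul, mul_comm]
  exact ⟨hz0, hc0⟩
end

section
/- Let A be a densely defined, closed symmetric operator in a separable Hilbert space H with boundary triplet {ℂ, Γ₀, Γ₁} for A*. Let σ be a positive Borel measure on ℝ with ∫ dσ(t)/(1+t²) < ∞ and h ∈ ℝ (the case h₀ = 0). Define the operator à in H̃ = H ⊕ L²(ℝ, dσ) by Ã(x₀, x₁) = (A*x₀, t·x₁(t) − Γ₀x₀) on the domain of pairs (x₀, x₁) with x₀ ∈ D(A*), t·x₁(t) − Γ₀x₀ ∈ L²(ℝ, dσ), and Γ₁x₀ + h·Γ₀x₀ + ∫ (x₁(t) − (t/(1+t²))·Γ₀x₀) dσ(t) = 0. Then à is symmetric: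 ⟨Ãx̃, ỹ⟩ = ⟨x̃, Ãỹ⟩ for all x̃, ỹ ∈ D(Ã). -/
open MeasureTheory LinearPMap
open scoped InnerProductSpace ComplexConjugate

lemma aux_den_ne (t : ℝ) : (1 + (t : ℂ) ^ 2) ≠ 0 := by
  have : (1 + (t : ℂ) ^ 2) = (((1 + t ^ 2 : ℝ)) : ℂ) := by push_cast; ring
  rw [this, Ne, Complex.ofReal_eq_zero]
  positivity

lemma aux_mulL2 {σ : Measure ℝ} {f g : ℝ → ℂ} (hf : MemLp f 2 σ) (hg : MemLp g 2 σ) :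
    Integrable (fun t => f t * g t) σ := by
  rw [← memLp_one_iff_integrable]
  have := MemLp.smul (φ := f) hg hf (r := 1)
    (hpqr := ⟨by norm_num [ENNReal.inv_two_add_inv_two]⟩)
  exact this

lemma aux_conjLp {σ : Measure ℝ} {p : ENNReal} {f : ℝ → ℂ} (hf : MemLp f p σ) :
    MemLp (fun t => conj (f t)) p σ :=
  hf.of_le (RCLike.continuous_conj.comp_aestronglyMeasurable hf.1)
    (Filter.Eventually.of_forall fun t => by simp)

lemma aux_int_conj {σ : Measure ℝ} {f : ℝ → ℂ} (hf : Integrable f σ) :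
    Integrable (fun t => conj (f t)) σ := by
  rw [← memLp_one_iff_integrable] at hf ⊢
  exact aux_conjLp hf

lemma aux_memL2_psi {σ : Measure ℝ} (hσ : Integrable (fun t : ℝ => (1 + t ^ 2)⁻¹) σ) :
    MemLp (fun t : ℝ => (1 + (t : ℂ) ^ 2)⁻¹) 2 σ := by
  have hcont : Continuous (fun t : ℝ => (1 + (t : ℂ) ^ 2)⁻¹) := by
    refine Continuous.inv₀ (by continuity) aux_den_ne
  rw [memLp_two_iff_integrable_sq_norm hcont.aestronglyMeasurable]
  refine hσ.mono' ((hcont.norm.pow 2).aestronglyMeasurable)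
    (Filter.Eventually.of_forall fun t => ?_)
  have h1 : (0:ℝ) < 1 + t ^ 2 := by positivity
  have h2 : (1:ℝ) ≤ 1 + t ^ 2 := by nlinarith
  have heq : (1 + (t : ℂ) ^ 2)⁻¹ = (((1 + t ^ 2)⁻¹ : ℝ) : ℂ) := by push_cast; ring
  rw [Real.norm_eq_abs, abs_of_nonneg (by positivity), heq, Complex.norm_real,
    Real.norm_eq_abs, abs_of_nonneg (by positivity), sq]
  calc (1 + t ^ 2)⁻¹ * (1 + t ^ 2)⁻¹ ≤ (1 + t^2)⁻¹ * 1 := by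
        gcongr
        rw [inv_le_one_iff₀]; right; exact h2
    _ = (1 + t^2)⁻¹ := mul_one _

lemma aux_memL2_phi {σ : Measure ℝ} (hσ : Integrable (fun t : ℝ => (1 + t ^ 2)⁻¹) σ) :
    MemLp (fun t : ℝ => (t : ℂ) / (1 + (t : ℂ) ^ 2)) 2 σ := by
  have hcont : Continuous (fun t : ℝ => (t : ℂ) / (1 + (t : ℂ) ^ 2)) := by
    refine Continuous.div (by continuity) (by continuity) aux_den_ne
  rw [memLp_two_iff_integrable_sq_norm hcont.aestronglyMeasurable]
  refine hσ.mono' ((hcont.norm.pow 2).aestronglyMeasurable)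
    (Filter.Eventually.of_forall fun t => ?_)
  have h1 : (0:ℝ) < 1 + t ^ 2 := by positivity
  have heq : (t : ℂ) / (1 + (t : ℂ) ^ 2) = ((t / (1 + t ^ 2) : ℝ) : ℂ) := by push_cast; ring
  rw [Real.norm_eq_abs, abs_of_nonneg (by positivity), heq, Complex.norm_real,
    Real.norm_eq_abs, sq_abs, div_pow]
  rw [div_le_iff₀ (by positivity), pow_two (1 + t ^ 2), ← mul_assoc,
    inv_mul_cancel₀ h1.ne', one_mul]
  nlinarith [sq_nonneg t]

/-- (case `h₀ = 0`) the operator `Ã(x₀, x₁) = (A*x₀, t·x₁(t) − Γ₀x₀)` on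
`H ⊕ L²(ℝ, dσ)`, with domain given by `x₀ ∈ D(A*)`, `t·x₁(t) − Γ₀x₀ ∈ L²(ℝ, dσ)` and
`Γ₁x₀ + h·Γ₀x₀ + ∫ (x₁(t) − (t/(1+t²))Γ₀x₀) dσ(t) = 0`, is symmetric:
`⟨Ãx̃, ỹ⟩ = ⟨x̃, Ãỹ⟩` for all `x̃, ỹ` in its domain. -/
theorem tilde_A_symmetric_h0_zero
    {H : Type*} [NormedAddCommGroup H] [InnerProductSpace ℂ H] [CompleteSpace H]
    [TopologicalSpace.SeparableSpace H]
    (A : H →ₗ.[ℂ] H) (hdense : Dense (A.domain : Set H)) (hclosed : A.IsClosed)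
    (hsym : A ≤ A.adjoint)
    (Γ₀ Γ₁ : A.adjoint.domain →ₗ[ℂ] ℂ)
    (hGreen : ∀ x y : A.adjoint.domain,
      ⟪(A.adjoint x : H), (y : H)⟫_ℂ - ⟪(x : H), (A.adjoint y : H)⟫_ℂ =
        conj (Γ₁ x) * Γ₀ y - conj (Γ₀ x) * Γ₁ y)
    (hsurj : Function.Surjective (fun x : A.adjoint.domain => (Γ₀ x, Γ₁ x)))
    (σ : Measure ℝ) (hσ : Integrable (fun t : ℝ => (1 + t ^ 2)⁻¹) σ) (h : ℝ) :
    ∀ (x₀ y₀ : H) (hx₀ : x₀ ∈ A.adjoint.domain) (hy₀ : y₀ ∈ A.adjoint.domain)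
      (x₁ y₁ : Lp ℂ 2 σ),
      MemLp (fun t : ℝ => (t : ℂ) * x₁ t - Γ₀ ⟨x₀, hx₀⟩) 2 σ →
      MemLp (fun t : ℝ => (t : ℂ) * y₁ t - Γ₀ ⟨y₀, hy₀⟩) 2 σ →
      Γ₁ ⟨x₀, hx₀⟩ + (h : ℂ) * Γ₀ ⟨x₀, hx₀⟩ +
        ∫ t : ℝ, (x₁ t - ((t : ℂ) / (1 + (t : ℂ) ^ 2)) * Γ₀ ⟨x₀, hx₀⟩) ∂σ = 0 →
      Γ₁ ⟨y₀, hy₀⟩ + (h : ℂ) * Γ₀ ⟨y₀, hy₀⟩ +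
        ∫ t : ℝ, (y₁ t - ((t : ℂ) / (1 + (t : ℂ) ^ 2)) * Γ₀ ⟨y₀, hy₀⟩) ∂σ = 0 →
      ⟪(A.adjoint ⟨x₀, hx₀⟩ : H), y₀⟫_ℂ +
          ∫ t : ℝ, conj ((t : ℂ) * x₁ t - Γ₀ ⟨x₀, hx₀⟩) * y₁ t ∂σ =
        ⟪x₀, (A.adjoint ⟨y₀, hy₀⟩ : H)⟫_ℂ +
          ∫ t : ℝ, conj (x₁ t) * ((t : ℂ) * y₁ t - Γ₀ ⟨y₀, hy₀⟩) ∂σ := by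
  intro x₀ y₀ hx₀ hy₀ x₁ y₁ hfx hgy hxdom hydom
  set a : ℂ := Γ₀ ⟨x₀, hx₀⟩ with ha
  set b : ℂ := Γ₁ ⟨x₀, hx₀⟩ with hb
  set c : ℂ := Γ₀ ⟨y₀, hy₀⟩ with hc
  set d : ℂ := Γ₁ ⟨y₀, hy₀⟩ with hd
  -- integrability of the "domain condition" integrands
  have hu : Integrable (fun t : ℝ => x₁ t - ((t : ℂ) / (1 + (t : ℂ) ^ 2)) * a) σ := by
    refine ((aux_mulL2 (aux_memL2_psi hσ) (Lp.memLp x₁)).add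
      (aux_mulL2 (aux_memL2_phi hσ) hfx)).congr
      (Filter.Eventually.of_forall fun t => ?_)
    simp only [Pi.add_apply]
    field_simp [aux_den_ne t]
    ring
  have hv : Integrable (fun t : ℝ => y₁ t - ((t : ℂ) / (1 + (t : ℂ) ^ 2)) * c) σ := by
    refine ((aux_mulL2 (aux_memL2_psi hσ) (Lp.memLp y₁)).add
      (aux_mulL2 (aux_memL2_phi hσ) hgy)).congr
      (Filter.Eventually.of_forall fun t => ?_)
    simp only [Pi.add_apply]
    field_simp [aux_den_ne t]
    ring
  have hIu : ∫ t : ℝ, (x₁ t - ((t : ℂ) / (1 + (t : ℂ) ^ 2)) * a) ∂σ = -b - (h : ℂ) * a := by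
    linear_combination hxdom
  have hIv : ∫ t : ℝ, (y₁ t - ((t : ℂ) / (1 + (t : ℂ) ^ 2)) * c) ∂σ = -d - (h : ℂ) * c := by
    linear_combination hydom
  have key : (∫ t : ℝ, conj ((t : ℂ) * x₁ t - a) * y₁ t ∂σ) -
      (∫ t : ℝ, conj (x₁ t) * ((t : ℂ) * y₁ t - c) ∂σ) = conj a * d - conj b * c := by
    have I1 : Integrable (fun t : ℝ => conj ((t : ℂ) * x₁ t - a) * y₁ t) σ :=
      aux_mulL2 (aux_conjLp hfx) (Lp.memLp y₁)
    have I2 : Integrable (fun t : ℝ => conj (x₁ t) * ((t : ℂ) * y₁ t - c)) σ :=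
      aux_mulL2 (aux_conjLp (Lp.memLp x₁)) hgy
    rw [← integral_sub I1 I2]
    have heq : (fun t : ℝ => conj ((t : ℂ) * x₁ t - a) * y₁ t -
        conj (x₁ t) * ((t : ℂ) * y₁ t - c)) =
        fun t : ℝ => c * conj (x₁ t - ((t : ℂ) / (1 + (t : ℂ) ^ 2)) * a) -
          conj a * (y₁ t - ((t : ℂ) / (1 + (t : ℂ) ^ 2)) * c) := by
      funext t
      simp only [_root_.map_sub, _root_.map_mul, map_div₀, _root_.map_add, map_one, map_pow, Complex.conj_ofReal]
      ring
    rw [heq, integral_sub ((aux_int_conj hu).const_mul c) (hv.const_mul (conj a)),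
      integral_const_mul, integral_const_mul, integral_conj, hIu, hIv]
    simp only [_root_.map_sub, _root_.map_neg, _root_.map_mul, Complex.conj_ofReal]
    ring
  have hG : ⟪(A.adjoint ⟨x₀, hx₀⟩ : H), y₀⟫_ℂ - ⟪x₀, (A.adjoint ⟨y₀, hy₀⟩ : H)⟫_ℂ =
      conj b * c - conj a * d := hGreen ⟨x₀, hx₀⟩ ⟨y₀, hy₀⟩
  linear_combination hG + key
end

section
/- Let A be a densely defined, closed symmetric operator in a separable Hilbert space H with boundary triplet {ℂ, Γ₀, Γ₁} for A*. Let σ be a positive Borel measure on ℝ with ∫ dσ(t)/(1+t²) < ∞, let h₀ > 0 and h ∈ ℝ. Define H̃ = H ⊕ L²(ℝ, dσ) ⊕ ℂ with inner product ⟨x̃, ỹ⟩ = ⟨x₀,y₀⟩_H + ∫ x₁(t)·conj(y₁(t)) dσ(t) + x₂·conj(y₂)/h₀, and the operator à by Ãx̃ = (A*x₀, t·x₁(t) − Γ₀x₀, Γ₁x₀ + h·Γ₀x₀ + ∫ (x₁(t) − (t/(1+t²))Γ₀x₀) dσ(t)) on the domain {x̃ : x₀ ∈ D(A*), t·x₁(t)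 − Γ₀x₀ ∈ L²(ℝ, dσ), x₂ = −h₀·Γ₀x₀}. Then à is self-adjoint. -/
open MeasureTheory LinearPMap
open scoped InnerProductSpace ComplexConjugate


variable {σ : Measure ℝ}

lemma integrable_conj_mul {f g : ℝ → ℂ} (hf : MemLp f 2 σ) (hg : MemLp g 2 σ) :
    Integrable (fun t : ℝ => conj (f t) * g t) σ := by
  have h := L2.integrable_inner (𝕜 := ℂ) (hf.toLp f) (hg.toLp g)
  refine (integrable_congr ?_).mp h
  filter_upwards [hf.coeFn_toLp, hg.coeFn_toLp] with t h1 h2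
  rw [RCLike.inner_apply, h1, h2, mul_comm]

lemma sq_cast (t : ℝ) : ((1 : ℂ) + (t:ℂ)^2) = ((1 + t^2 : ℝ) : ℂ) := by push_cast; ring

lemma one_add_sq_pos (t : ℝ) : (0:ℝ) < 1 + t^2 := by positivity

lemma one_add_sq_ne (t : ℝ) : ((1 : ℂ) + (t:ℂ)^2) ≠ 0 := by
  rw [sq_cast]; exact_mod_cast (one_add_sq_pos t).ne'

lemma winv_norm (t : ℝ) : ‖((1 : ℂ) + (t:ℂ)^2)⁻¹‖ = (1 + t^2)⁻¹ := by
  rw [sq_cast, norm_inv, Complex.norm_real, Real.norm_eq_abs, abs_of_pos (one_add_sq_pos t)]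

lemma winv_memL2 (hσ : Integrable (fun t : ℝ => (1 + t ^ 2)⁻¹) σ) :
    MemLp (fun t : ℝ => ((1 : ℂ) + (t:ℂ) ^ 2)⁻¹) 2 σ := by
  have hm : AEStronglyMeasurable (fun t : ℝ => ((1 : ℂ) + (t:ℂ) ^ 2)⁻¹) σ :=
    Continuous.aestronglyMeasurable (Continuous.inv₀ (by continuity) one_add_sq_ne)
  rw [memLp_two_iff_integrable_sq_norm hm]
  refine hσ.mono (by simpa [pow_two, Pi.mul_def] using hm.norm.mul hm.norm)
    (Filter.Eventually.of_forall fun t : ℝ => ?_)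
  have h1 : (0:ℝ) < 1 + t^2 := one_add_sq_pos t
  have e1 : ‖‖((1:ℂ) + (t:ℂ)^2)⁻¹‖^2‖ = ((1+t^2)⁻¹)^2 := by
    rw [Real.norm_eq_abs, abs_of_nonneg (by positivity), winv_norm]
  have e2 : ‖(1+t^2)⁻¹‖ = (1+t^2)⁻¹ := by
    rw [Real.norm_eq_abs, abs_of_pos (by positivity)]
  rw [e1, e2, inv_pow, ← one_div, ← one_div, div_le_div_iff₀ (by positivity) h1]
  nlinarith [sq_nonneg t, sq_nonneg (t^2)]

lemma phi_memL2 (hσ : Integrable (fun t : ℝ => (1 + t ^ 2)⁻¹) σ) :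
    MemLp (fun t : ℝ => (t:ℂ) * ((1 : ℂ) + (t:ℂ) ^ 2)⁻¹) 2 σ := by
  have hm : AEStronglyMeasurable (fun t : ℝ => (t:ℂ) * ((1 : ℂ) + (t:ℂ) ^ 2)⁻¹) σ :=
    Continuous.aestronglyMeasurable
      (Continuous.mul (by continuity) (Continuous.inv₀ (by continuity) one_add_sq_ne))
  rw [memLp_two_iff_integrable_sq_norm hm]
  refine hσ.mono (by simpa [pow_two, Pi.mul_def] using hm.norm.mul hm.norm)
    (Filter.Eventually.of_forall fun t : ℝ => ?_)
  have h1 : (0:ℝ) < 1 + t^2 := one_add_sq_pos t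
  have e1 : ‖‖(t:ℂ) * ((1:ℂ) + (t:ℂ)^2)⁻¹‖^2‖ = t^2 * ((1+t^2)⁻¹)^2 := by
    rw [Real.norm_eq_abs, abs_of_nonneg (by positivity), norm_mul, winv_norm,
      Complex.norm_real, mul_pow, Real.norm_eq_abs, sq_abs]
  have e2 : ‖(1+t^2)⁻¹‖ = (1+t^2)⁻¹ := by
    rw [Real.norm_eq_abs, abs_of_pos (by positivity)]
  rw [e1, e2, inv_pow, ← div_eq_mul_inv, ← one_div, div_le_div_iff₀ (by positivity) h1]
  nlinarith [sq_nonneg t, sq_nonneg (t^2), sq_nonneg (1+t^2)]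

lemma memL2_conj {f : ℝ → ℂ} (hf : MemLp f 2 σ) : MemLp (fun t : ℝ => conj (f t)) 2 σ := by
  refine hf.of_le (RCLike.continuous_conj.comp_aestronglyMeasurable hf.1)
    (Filter.Eventually.of_forall fun t : ℝ => ?_)
  rw [RCLike.norm_conj]

lemma integrable_mul_L2 {f g : ℝ → ℂ} (hf : MemLp f 2 σ) (hg : MemLp g 2 σ) :
    Integrable (fun t : ℝ => f t * g t) σ := by
  have := integrable_conj_mul (memL2_conj hf) hg
  simpa using this

lemma winv_conj (t : ℝ) : conj (((1:ℂ) + (t:ℂ)^2)⁻¹) = ((1:ℂ) + (t:ℂ)^2)⁻¹ := by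
  rw [map_inv₀, sq_cast, Complex.conj_ofReal]

lemma key_integrable {f : ℝ → ℂ} {a : ℂ} (hσ : Integrable (fun t : ℝ => (1 + t ^ 2)⁻¹) σ)
    (hf : MemLp f 2 σ) (hft : MemLp (fun t : ℝ => (t:ℂ) * f t - a) 2 σ) :
    Integrable (fun t : ℝ => f t - (t:ℂ) * ((1:ℂ) + (t:ℂ)^2)⁻¹ * a) σ := by
  have h1 : Integrable (fun t : ℝ => ((1:ℂ)+(t:ℂ)^2)⁻¹ * f t) σ :=
    integrable_mul_L2 (winv_memL2 hσ) hf
  have h2 : Integrable (fun t : ℝ => ((t:ℂ) * ((1:ℂ)+(t:ℂ)^2)⁻¹) * ((t:ℂ) * f t - a)) σ :=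
    integrable_mul_L2 (phi_memL2 hσ) hft
  refine (h1.add h2).congr (Filter.Eventually.of_forall fun t : ℝ => ?_)
  have hne := one_add_sq_ne t
  simp only [Pi.add_apply]
  field_simp
  ring

lemma integrable_conj {f : ℝ → ℂ} (hf : Integrable f σ) :
    Integrable (fun t : ℝ => conj (f t)) σ :=
  ⟨RCLike.continuous_conj.comp_aestronglyMeasurable hf.1,
   hf.2.congr' (Filter.Eventually.of_forall fun t => (RCLike.norm_conj _).symm)⟩

lemma phiv_conj (t : ℝ) : conj ((t:ℂ)/(1+(t:ℂ)^2)) = (t:ℂ)/(1+(t:ℂ)^2) := by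
  rw [map_div₀, Complex.conj_ofReal, sq_cast, Complex.conj_ofReal]

set_option maxHeartbeats 1000000 in
/-- (case `h₀ > 0`) the operator
`Ãx̃ = (A*x₀, t·x₁(t) − Γ₀x₀, Γ₁x₀ + h·Γ₀x₀ + ∫(x₁(t) − (t/(1+t²))Γ₀x₀)dσ)` on
`H̃ = H ⊕ L²(ℝ, dσ) ⊕ ℂ` with weighted inner product (weight `1/h₀` on the last summand)
and domain `{x̃ : x₀ ∈ D(A*), t·x₁(t) − Γ₀x₀ ∈ L², x₂ = −h₀Γ₀x₀}` is self-adjoint: a pair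
`(ỹ, z̃)` satisfies the adjoint relation `⟨Ãx̃, ỹ⟩ = ⟨x̃, z̃⟩` for all `x̃ ∈ D(Ã)` iff
`ỹ ∈ D(Ã)` and `z̃ = Ãỹ`. -/
theorem tilde_A_selfadjoint_h0_pos
    {H : Type*} [NormedAddCommGroup H] [InnerProductSpace ℂ H] [CompleteSpace H]
    [TopologicalSpace.SeparableSpace H]
    (A : H →ₗ.[ℂ] H) (hdense : Dense (A.domain : Set H)) (hclosed : A.IsClosed)
    (hsym : A ≤ A.adjoint)
    (Γ₀ Γ₁ : A.adjoint.domain →ₗ[ℂ] ℂ)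
    (hGreen : ∀ x y : A.adjoint.domain,
      ⟪(A.adjoint x : H), (y : H)⟫_ℂ - ⟪(x : H), (A.adjoint y : H)⟫_ℂ =
        conj (Γ₁ x) * Γ₀ y - conj (Γ₀ x) * Γ₁ y)
    (hsurj : Function.Surjective (fun x : A.adjoint.domain => (Γ₀ x, Γ₁ x)))
    (σ : Measure ℝ) (hσ : Integrable (fun t : ℝ => (1 + t ^ 2)⁻¹) σ)
    (h₀ h : ℝ) (hh₀ : 0 < h₀) :
    ∀ (y₀ z₀ : H) (y₁ z₁ : Lp ℂ 2 σ) (y₂ z₂ : ℂ),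
      (∀ (x₀ : H) (hx₀ : x₀ ∈ A.adjoint.domain) (x₁ : Lp ℂ 2 σ) (x₂ : ℂ),
        MemLp (fun t : ℝ => (t : ℂ) * x₁ t - Γ₀ ⟨x₀, hx₀⟩) 2 σ →
        x₂ = -(h₀ : ℂ) * Γ₀ ⟨x₀, hx₀⟩ →
        ⟪(A.adjoint ⟨x₀, hx₀⟩ : H), y₀⟫_ℂ +
            (∫ t : ℝ, conj ((t : ℂ) * x₁ t - Γ₀ ⟨x₀, hx₀⟩) * y₁ t ∂σ) +
            conj (Γ₁ ⟨x₀, hx₀⟩ + (h : ℂ) * Γ₀ ⟨x₀, hx₀⟩ +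
              ∫ t : ℝ, (x₁ t - ((t : ℂ) / (1 + (t : ℂ) ^ 2)) * Γ₀ ⟨x₀, hx₀⟩) ∂σ) *
              y₂ / (h₀ : ℂ) =
          ⟪x₀, z₀⟫_ℂ + (∫ t : ℝ, conj (x₁ t) * z₁ t ∂σ) + conj x₂ * z₂ / (h₀ : ℂ)) ↔
      (∃ hy₀ : y₀ ∈ A.adjoint.domain,
        MemLp (fun t : ℝ => (t : ℂ) * y₁ t - Γ₀ ⟨y₀, hy₀⟩) 2 σ ∧
        y₂ = -(h₀ : ℂ) * Γ₀ ⟨y₀, hy₀⟩ ∧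
        z₀ = A.adjoint ⟨y₀, hy₀⟩ ∧
        (∀ᵐ (t : ℝ) ∂σ, z₁ t = (t : ℂ) * y₁ t - Γ₀ ⟨y₀, hy₀⟩) ∧
        z₂ = Γ₁ ⟨y₀, hy₀⟩ + (h : ℂ) * Γ₀ ⟨y₀, hy₀⟩ +
          ∫ t : ℝ, (y₁ t - ((t : ℂ) / (1 + (t : ℂ) ^ 2)) * Γ₀ ⟨y₀, hy₀⟩) ∂σ) := by
  have hh₀c : ((h₀ : ℂ)) ≠ 0 := Complex.ofReal_ne_zero.mpr hh₀.ne'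
  -- Green identity, restated
  have green : ∀ x y : A.adjoint.domain,
      ⟪(A.adjoint x : H), (y : H)⟫_ℂ =
        ⟪(x : H), (A.adjoint y : H)⟫_ℂ + conj (Γ₁ x) * Γ₀ y - conj (Γ₀ x) * Γ₁ y := by
    intro x y
    linear_combination hGreen x y
  -- elements of the domain of A have vanishing boundary values
  have hker : ∀ u : A.domain, Γ₀ ⟨(u : H), hsym.1 u.2⟩ = 0 ∧ Γ₁ ⟨(u : H), hsym.1 u.2⟩ = 0 := by
    intro u
    set u' : A.adjoint.domain := ⟨(u : H), hsym.1 u.2⟩ with hu'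
    have hAu : A.adjoint u' = A u := (hsym.2 (x := u) (y := u') rfl).symm
    have hadj := LinearPMap.adjoint_isFormalAdjoint hdense
    have h0 : ∀ v : A.adjoint.domain, conj (Γ₁ u') * Γ₀ v - conj (Γ₀ u') * Γ₁ v = 0 := by
      intro v
      rw [← hGreen u' v, hAu]
      have h2 := hadj v u
      have h1 : ⟪(A u : H), (v : H)⟫_ℂ = ⟪((u : H)), (A.adjoint v : H)⟫_ℂ := by
        calc ⟪(A u : H), (v : H)⟫_ℂ = conj ⟪((v : A.adjoint.domain) : H), (A u : H)⟫_ℂ := by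
              rw [inner_conj_symm]
          _ = conj ⟪(A.adjoint v : H), ((u : H))⟫_ℂ := by rw [h2]
          _ = ⟪((u : H)), (A.adjoint v : H)⟫_ℂ := by rw [inner_conj_symm]
      rw [show ((u' : H)) = ((u : H)) from rfl, h1, sub_self]
    constructor
    · obtain ⟨v, hv⟩ := hsurj (0, 1)
      have hv0 : Γ₀ v = 0 := congrArg Prod.fst hv
      have hv1 : Γ₁ v = 1 := congrArg Prod.snd hv
      have h3 := h0 v
      rw [hv0, hv1] at h3
      have h4 : conj (Γ₀ u') = 0 := by linear_combination -h3
      have h5 := congrArg conj h4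
      simpa using h5
    · obtain ⟨v, hv⟩ := hsurj (1, 0)
      have hv0 : Γ₀ v = 1 := congrArg Prod.fst hv
      have hv1 : Γ₁ v = 0 := congrArg Prod.snd hv
      have h3 := h0 v
      rw [hv0, hv1] at h3
      have h4 : conj (Γ₁ u') = 0 := by linear_combination h3
      have h5 := congrArg conj h4
      simpa using h5
  intro y₀ z₀ y₁ z₁ y₂ z₂
  constructor
  · intro hyp
    -- Step S1 : almost everywhere, z₁ t = t * y₁ t + y₂ / h₀
    have hS1 : ∀ᵐ t ∂σ, z₁ t = (t:ℂ) * y₁ t + y₂ / (h₀:ℂ) := by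
      set g : ℝ → ℂ := fun t : ℝ => (t:ℂ) * y₁ t + y₂ / (h₀:ℂ) - z₁ t with hgdef
      have hkey : ∀ n : ℕ, ∀ᵐ t ∂σ, t ∈ Set.Icc (-(n:ℝ)) (n:ℝ) → g t = 0 := by
        intro n
        set s : Set ℝ := Set.Icc (-(n:ℝ)) (n:ℝ) with hsdef
        have hsm : MeasurableSet s := measurableSet_Icc
        have habs : ∀ t ∈ s, |t| ≤ (n:ℝ) := fun t ht => abs_le.mpr ⟨ht.1, ht.2⟩
        have hfin : σ s < ⊤ := by
          refine lt_of_le_of_lt (measure_mono fun t ht => ?_)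
            (hσ.measure_ge_lt_top (show (0:ℝ) < (1+(n:ℝ)^2)⁻¹ by positivity))
          simp only [Set.mem_setOf_eq]
          have h1 : |t| ≤ (n:ℝ) := habs t ht
          have h2 : t^2 ≤ (n:ℝ)^2 := by nlinarith [abs_nonneg t, sq_abs t]
          exact inv_anti₀ (by positivity) (by nlinarith)
        have hmul_mem : ∀ f : ℝ → ℂ, MemLp f 2 σ → (∀ t, t ∉ s → f t = 0) →
            MemLp (fun t : ℝ => (t:ℂ) * f t) 2 σ := by
          intro f hf hf0
          refine MemLp.of_le (hf.const_mul ((n:ℝ):ℂ))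
            (Complex.continuous_ofReal.aestronglyMeasurable.mul hf.1)
            (Filter.Eventually.of_forall fun t => ?_)
          by_cases ht : t ∈ s
          · rw [norm_mul, norm_mul, Complex.norm_real, Complex.norm_real, Real.norm_eq_abs,
              Real.norm_eq_abs, abs_of_nonneg (a := (n:ℝ)) (Nat.cast_nonneg n)]
            exact mul_le_mul_of_nonneg_right (habs t ht) (norm_nonneg _)
          · rw [hf0 t ht, mul_zero, norm_zero, mul_zero, norm_zero]
        have hind1 : MemLp (s.indicator fun t : ℝ => (t:ℂ) * y₁ t) 2 σ := by
          refine MemLp.of_le ((Lp.memLp y₁).const_mul ((n:ℝ):ℂ))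
            ((Complex.continuous_ofReal.aestronglyMeasurable.mul
              (Lp.aestronglyMeasurable y₁)).indicator hsm)
            (Filter.Eventually.of_forall fun t => ?_)
          by_cases ht : t ∈ s
          · rw [Set.indicator_of_mem ht, norm_mul, norm_mul, Complex.norm_real,
              Complex.norm_real, Real.norm_eq_abs, Real.norm_eq_abs,
              abs_of_nonneg (a := (n:ℝ)) (Nat.cast_nonneg n)]
            exact mul_le_mul_of_nonneg_right (habs t ht) (norm_nonneg _)
          · rw [Set.indicator_of_notMem ht, norm_zero]
            positivity
        have hind2 : MemLp (s.indicator fun _ : ℝ => y₂ / (h₀:ℂ)) 2 σ :=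
          memLp_indicator_const 2 hsm _ (Or.inr hfin.ne)
        have hind3 : MemLp (s.indicator fun t : ℝ => z₁ t) 2 σ := (Lp.memLp z₁).indicator hsm
        have hgeq : s.indicator g = fun t : ℝ =>
            s.indicator (fun t : ℝ => (t:ℂ) * y₁ t) t + s.indicator (fun _ : ℝ => y₂ / (h₀:ℂ)) t
              - s.indicator (fun t : ℝ => z₁ t) t := by
          funext t
          by_cases ht : t ∈ s
          · simp only [Set.indicator_of_mem ht, hgdef]
          · simp [Set.indicator_of_notMem ht]
        have hgind : MemLp (s.indicator g) 2 σ := by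
          rw [hgeq]; exact (hind1.add hind2).sub hind3
        have hrestr : MemLp g 2 (σ.restrict s) :=
          MemLp.ae_eq (indicator_ae_eq_restrict hsm) (hgind.restrict s)
        haveI : IsFiniteMeasure (σ.restrict s) := ⟨by rwa [Measure.restrict_apply_univ]⟩
        have hgint : Integrable (s.indicator g) σ :=
          (integrable_indicator_iff hsm).mpr (hrestr.integrable one_le_two)
        have hty : MemLp (fun t : ℝ => (t:ℂ) * s.indicator g t) 2 σ :=
          hmul_mem _ hgind (fun t ht => Set.indicator_of_notMem ht g)
        have h0m : (0:H) ∈ A.adjoint.domain := Submodule.zero_mem _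
        have h00 : (⟨(0:H), h0m⟩ : A.adjoint.domain) = 0 := Subtype.ext rfl
        have hE := hyp 0 h0m (hgind.toLp _) 0 ?_ ?_
        rotate_left
        · rw [h00, LinearMap.map_zero]
          refine MemLp.ae_eq ?_ hty
          filter_upwards [hgind.coeFn_toLp] with t ht
          rw [ht, sub_zero]
        · rw [h00, LinearMap.map_zero, mul_zero]
        have e1 : ∫ t : ℝ, conj ((t:ℂ) * (hgind.toLp _) t - Γ₀ ⟨(0:H), h0m⟩) * y₁ t ∂σ
            = ∫ t : ℝ, conj (s.indicator g t) * ((t:ℂ) * y₁ t) ∂σ := by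
          rw [h00, LinearMap.map_zero]
          refine integral_congr_ae ?_
          filter_upwards [hgind.coeFn_toLp] with t ht
          rw [ht, sub_zero, map_mul, Complex.conj_ofReal]
          ring
        have e2 : ∫ t : ℝ, ((hgind.toLp _) t - ((t:ℂ)/(1+(t:ℂ)^2)) * Γ₀ ⟨(0:H), h0m⟩) ∂σ
            = ∫ t : ℝ, s.indicator g t ∂σ := by
          rw [h00, LinearMap.map_zero]
          refine integral_congr_ae ?_
          filter_upwards [hgind.coeFn_toLp] with t ht
          rw [ht, mul_zero, sub_zero]
        have e3 : ∫ t : ℝ, conj ((hgind.toLp _) t) * z₁ t ∂σ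
            = ∫ t : ℝ, conj (s.indicator g t) * z₁ t ∂σ := by
          refine integral_congr_ae ?_
          filter_upwards [hgind.coeFn_toLp] with t ht
          rw [ht]
        rw [e1, e2, e3, h00] at hE
        simp only [LinearMap.map_zero, LinearPMap.map_zero, Submodule.coe_zero,
          inner_zero_left, zero_add, mul_zero, add_zero, RingHom.map_zero, zero_mul, zero_div] at hE
        -- hE : ∫ conj (ind g) (t y₁) + conj (∫ ind g) * y₂ / h₀ = ∫ conj (ind g) z₁
        have hI1 : Integrable (fun t : ℝ => conj (s.indicator g t) * ((t:ℂ) * y₁ t)) σ := by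
          refine (integrable_conj_mul hty (Lp.memLp y₁)).congr
            (Filter.Eventually.of_forall fun t => ?_)
          simp only [map_mul, Complex.conj_ofReal]
          ring
        have hI2 : Integrable (fun t : ℝ => conj (s.indicator g t) * (y₂/(h₀:ℂ))) σ := by
          have hmm : MemLp (fun t : ℝ => conj (g t) * (y₂/(h₀:ℂ))) 2 (σ.restrict s) := by
            have := (memL2_conj hrestr).const_mul (y₂/(h₀:ℂ))
            refine this.ae_eq (Filter.Eventually.of_forall fun t => ?_)
            ring
          have : Integrable (s.indicator fun t : ℝ => conj (g t) * (y₂/(h₀:ℂ))) σ :=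
            (integrable_indicator_iff hsm).mpr (hmm.integrable one_le_two)
          refine this.congr (Filter.Eventually.of_forall fun t => ?_)
          by_cases ht : t ∈ s <;>
            simp [Set.indicator_of_mem, Set.indicator_of_notMem, ht]
        have hI3 : Integrable (fun t : ℝ => conj (s.indicator g t) * z₁ t) σ :=
          integrable_conj_mul hgind (Lp.memLp z₁)
        have hcomb : ∀ t : ℝ, conj (s.indicator g t) * ((t:ℂ) * y₁ t)
            + conj (s.indicator g t) * (y₂/(h₀:ℂ)) - conj (s.indicator g t) * z₁ t
            = ((s.indicator (fun t : ℝ => ‖g t‖^2) t : ℝ) : ℂ) := by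
          intro t
          by_cases ht : t ∈ s
          · simp only [Set.indicator_of_mem ht]
            rw [← mul_add, ← mul_sub]
            have : (t:ℂ) * y₁ t + y₂/(h₀:ℂ) - z₁ t = g t := rfl
            rw [this, RCLike.conj_mul]
            norm_cast
          · simp [Set.indicator_of_notMem ht]
        have e4 : conj (∫ t : ℝ, s.indicator g t ∂σ) * y₂ / (h₀:ℂ)
            = ∫ t : ℝ, conj (s.indicator g t) * (y₂/(h₀:ℂ)) ∂σ := by
          rw [mul_div_assoc, ← integral_conj, ← integral_mul_const]
        have hzero : ∫ t : ℝ, ((s.indicator (fun t : ℝ => ‖g t‖^2) t : ℝ) : ℂ) ∂σ = 0 := by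
          have hI12 : Integrable (fun t : ℝ => conj (s.indicator g t) * ((t:ℂ) * y₁ t)
              + conj (s.indicator g t) * (y₂/(h₀:ℂ))) σ := hI1.add hI2
          have hsplit : ∫ t : ℝ, ((s.indicator (fun t : ℝ => ‖g t‖^2) t : ℝ) : ℂ) ∂σ
              = (∫ t : ℝ, conj (s.indicator g t) * ((t:ℂ) * y₁ t) ∂σ)
                + (∫ t : ℝ, conj (s.indicator g t) * (y₂/(h₀:ℂ)) ∂σ)
                - ∫ t : ℝ, conj (s.indicator g t) * z₁ t ∂σ := by
            calc ∫ t : ℝ, ((s.indicator (fun t : ℝ => ‖g t‖^2) t : ℝ) : ℂ) ∂σ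
                = ∫ t : ℝ, (conj (s.indicator g t) * ((t:ℂ) * y₁ t)
                    + conj (s.indicator g t) * (y₂/(h₀:ℂ))
                    - conj (s.indicator g t) * z₁ t) ∂σ :=
                  integral_congr_ae (Filter.Eventually.of_forall fun t => (hcomb t).symm)
              _ = (∫ t : ℝ, (conj (s.indicator g t) * ((t:ℂ) * y₁ t)
                    + conj (s.indicator g t) * (y₂/(h₀:ℂ))) ∂σ)
                    - ∫ t : ℝ, conj (s.indicator g t) * z₁ t ∂σ := integral_sub hI12 hI3
              _ = _ := by rw [integral_add hI1 hI2]
          rw [hsplit, ← e4]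
          linear_combination hE
        have hzero2 : ((∫ t : ℝ, s.indicator (fun t : ℝ => ‖g t‖^2) t ∂σ : ℝ) : ℂ) = 0 :=
          (integral_ofReal (𝕜 := ℂ)
            (f := fun t : ℝ => s.indicator (fun t : ℝ => ‖g t‖^2) t)).symm.trans hzero
        have hzero' : ∫ t : ℝ, s.indicator (fun t : ℝ => ‖g t‖^2) t ∂σ = 0 := by
          exact_mod_cast hzero2
        have hnn : 0 ≤ᵐ[σ] fun t : ℝ => s.indicator (fun t : ℝ => ‖g t‖^2) t :=
          Filter.Eventually.of_forall fun t =>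
            Set.indicator_nonneg (fun a _ => sq_nonneg _) t
        have hii : Integrable (fun t : ℝ => s.indicator (fun t : ℝ => ‖g t‖^2) t) σ :=
          (integrable_indicator_iff hsm).mpr
            ((memLp_two_iff_integrable_sq_norm hrestr.1).mp hrestr)
        have hae := (integral_eq_zero_iff_of_nonneg_ae hnn hii).mp hzero'
        filter_upwards [hae] with t ht hts
        have h5 : ‖g t‖^2 = 0 := by
          have := ht
          simp only [Pi.zero_apply] at this
          rwa [Set.indicator_of_mem hts] at this
        have h6 : ‖g t‖ = 0 := by
          nlinarith [norm_nonneg (g t)]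
        exact norm_eq_zero.mp h6
      have hall := ae_all_iff.2 hkey
      filter_upwards [hall] with t ht
      obtain ⟨n, hn⟩ := exists_nat_ge |t|
      have h7 := ht n ⟨(abs_le.mp hn).1, (abs_le.mp hn).2⟩
      have h8 : (t:ℂ) * y₁ t + y₂ / (h₀:ℂ) - z₁ t = 0 := h7
      linear_combination -h8
    -- zero test function facts
    have hzero_ae : (⇑(0 : Lp ℂ 2 σ)) =ᵐ[σ] fun _ => (0:ℂ) := Lp.coeFn_zero ℂ 2 σ
    have ezmem : ∀ c : ℂ, c = 0 → MemLp (fun t : ℝ => (t:ℂ) * (0 : Lp ℂ 2 σ) t - c) 2 σ := by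
      intro c hc
      refine MemLp.ae_eq ?_ (MemLp.zero (ε := ℂ) (p := 2) (μ := σ))
      filter_upwards [hzero_ae] with t ht
      simp only [Pi.zero_apply, ht, hc, mul_zero, sub_zero]
    have ez1 : ∀ c : ℂ, c = 0 →
        ∫ t : ℝ, conj ((t:ℂ) * (0 : Lp ℂ 2 σ) t - c) * y₁ t ∂σ = 0 := by
      intro c hc
      have hh : (fun t : ℝ => conj ((t:ℂ) * (0 : Lp ℂ 2 σ) t - c) * y₁ t) =ᵐ[σ]
          fun _ => (0:ℂ) := by
        filter_upwards [hzero_ae] with t ht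
        simp only [ht, hc, mul_zero, sub_zero, _root_.map_zero, zero_mul]
      rw [integral_congr_ae hh, integral_zero]
    have ez2 : ∀ c : ℂ, c = 0 →
        ∫ t : ℝ, ((0 : Lp ℂ 2 σ) t - ((t:ℂ)/(1+(t:ℂ)^2)) * c) ∂σ = 0 := by
      intro c hc
      have hh : (fun t : ℝ => (0 : Lp ℂ 2 σ) t - ((t:ℂ)/(1+(t:ℂ)^2)) * c) =ᵐ[σ]
          fun _ => (0:ℂ) := by
        filter_upwards [hzero_ae] with t ht
        simp only [ht, hc, mul_zero, sub_zero]
      rw [integral_congr_ae hh, integral_zero]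
    have ez3 : ∫ t : ℝ, conj ((0 : Lp ℂ 2 σ) t) * z₁ t ∂σ = 0 := by
      have hh : (fun t : ℝ => conj ((0 : Lp ℂ 2 σ) t) * z₁ t) =ᵐ[σ] fun _ => (0:ℂ) := by
        filter_upwards [hzero_ae] with t ht
        simp only [ht, _root_.map_zero, zero_mul]
      rw [integral_congr_ae hh, integral_zero]
    -- Step S2 : y₀ is in the domain of the adjoint and A† y₀ = z₀
    have hS2base : ∀ u : A.domain, ⟪(A u : H), y₀⟫_ℂ = ⟪((u : H)), z₀⟫_ℂ := by
      intro u
      have hk := hker u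
      have hAu : A.adjoint ⟨(u:H), hsym.1 u.2⟩ = A u :=
        (hsym.2 (x := u) (y := ⟨(u:H), hsym.1 u.2⟩) rfl).symm
      have hE := hyp (u:H) (hsym.1 u.2) 0 0 (by rw [hk.1]; exact ezmem _ rfl)
        (by rw [hk.1, mul_zero])
      rw [ez1 _ hk.1, ez2 _ hk.1, ez3, hk.1, hk.2, hAu] at hE
      simpa using hE
    have hadj2 : ∀ u : A.domain, ⟪z₀, ((u : H))⟫_ℂ = ⟪y₀, (A u : H)⟫_ℂ := by
      intro u
      calc ⟪z₀, ((u : H))⟫_ℂ = conj ⟪((u : H)), z₀⟫_ℂ := by rw [inner_conj_symm]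
        _ = conj ⟪(A u : H), y₀⟫_ℂ := by rw [hS2base u]
        _ = ⟪y₀, (A u : H)⟫_ℂ := by rw [inner_conj_symm]
    have hy₀ : y₀ ∈ A.adjoint.domain :=
      LinearPMap.mem_adjoint_domain_of_exists y₀ ⟨z₀, fun u => hadj2 u⟩
    have hz₀ : A.adjoint ⟨y₀, hy₀⟩ = z₀ :=
      LinearPMap.adjoint_apply_eq hdense ⟨y₀, hy₀⟩ (fun u => hadj2 u)
    have hco : ((⟨y₀, hy₀⟩ : A.adjoint.domain) : H) = y₀ := rfl
    -- Step S3 : the value of y₂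
    obtain ⟨xa, hxa⟩ := hsurj (0, 1)
    have hxa0 : Γ₀ xa = 0 := congrArg Prod.fst hxa
    have hxa1 : Γ₁ xa = 1 := congrArg Prod.snd hxa
    have hy₂ : y₂ = -(h₀:ℂ) * Γ₀ ⟨y₀, hy₀⟩ := by
      have hEa := hyp (xa : H) xa.2 0 0
        (by rw [Subtype.coe_eta, hxa0]; exact ezmem _ rfl)
        (by rw [Subtype.coe_eta, hxa0, mul_zero])
      rw [Subtype.coe_eta, ez1 _ hxa0, ez2 _ hxa0, ez3, hxa0, hxa1] at hEa
      simp only [mul_zero, add_zero, zero_add, map_one, one_mul, _root_.map_zero, zero_mul,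
        zero_div] at hEa
      -- hEa : ⟪A† xa, y₀⟫ + y₂ / h₀ = ⟪xa, z₀⟫
      have h9 : ⟪(A.adjoint xa : H), y₀⟫_ℂ = ⟪((xa : H)), z₀⟫_ℂ + Γ₀ ⟨y₀, hy₀⟩ := by
        have hg := green xa ⟨y₀, hy₀⟩
        rw [hco, hz₀, hxa0, hxa1] at hg
        simp only [map_one, _root_.map_zero, one_mul, zero_mul, mul_one, mul_zero,
          sub_zero, add_zero] at hg
        rw [hg]
      have h10 : y₂ / (h₀:ℂ) = -Γ₀ ⟨y₀, hy₀⟩ := by linear_combination hEa - h9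
      rw [div_eq_iff hh₀c] at h10
      linear_combination h10
    -- Step S4 : the membership condition for y and the value of z₁
    have hy₂div : y₂ / (h₀:ℂ) = -Γ₀ ⟨y₀, hy₀⟩ := by
      rw [hy₂, neg_mul, neg_div, mul_comm, mul_div_assoc, div_self hh₀c, mul_one]
    have hz₁ae : ∀ᵐ t ∂σ, z₁ t = (t:ℂ) * y₁ t - Γ₀ ⟨y₀, hy₀⟩ := by
      filter_upwards [hS1] with t ht
      rw [ht, hy₂div]
      ring
    have hmemy : MemLp (fun t : ℝ => (t:ℂ) * y₁ t - Γ₀ ⟨y₀, hy₀⟩) 2 σ :=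
      MemLp.ae_eq hz₁ae (Lp.memLp z₁)
    -- Step S5 : the value of z₂
    obtain ⟨xb, hxb⟩ := hsurj (1, 0)
    have hxb0 : Γ₀ xb = 1 := congrArg Prod.fst hxb
    have hxb1 : Γ₁ xb = 0 := congrArg Prod.snd hxb
    have φm : MemLp (fun t : ℝ => (t:ℂ) * ((1:ℂ) + (t:ℂ)^2)⁻¹) 2 σ := phi_memL2 hσ
    have hz₂ : z₂ = Γ₁ ⟨y₀, hy₀⟩ + (h:ℂ) * Γ₀ ⟨y₀, hy₀⟩ +
        ∫ t : ℝ, (y₁ t - ((t:ℂ) / (1 + (t:ℂ)^2)) * Γ₀ ⟨y₀, hy₀⟩) ∂σ := by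
      have hEb := hyp (xb : H) xb.2 (φm.toLp _) (-(h₀:ℂ)) ?_ ?_
      rotate_left
      · rw [Subtype.coe_eta, hxb0]
        refine MemLp.ae_eq ?_ (winv_memL2 hσ).neg
        filter_upwards [φm.coeFn_toLp] with t ht
        rw [ht]
        simp only [Pi.neg_apply]
        have hne := one_add_sq_ne t
        field_simp
        ring
      · rw [Subtype.coe_eta, hxb0, mul_one]
      rw [Subtype.coe_eta] at hEb
      have f1 : ∫ t : ℝ, conj ((t:ℂ) * (φm.toLp _) t - Γ₀ xb) * y₁ t ∂σ
          = - ∫ t : ℝ, ((1:ℂ)+(t:ℂ)^2)⁻¹ * y₁ t ∂σ := by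
        rw [hxb0, ← integral_neg]
        refine integral_congr_ae ?_
        filter_upwards [φm.coeFn_toLp] with t ht
        rw [ht]
        simp only [_root_.map_sub, _root_.map_mul, _root_.map_one, Complex.conj_ofReal,
          winv_conj]
        have hne := one_add_sq_ne t
        field_simp
        ring
      have f2 : ∫ t : ℝ, ((φm.toLp _) t - ((t:ℂ)/(1+(t:ℂ)^2)) * Γ₀ xb) ∂σ = 0 := by
        rw [hxb0]
        have hh : (fun t : ℝ => (φm.toLp _) t - ((t:ℂ)/(1+(t:ℂ)^2)) * 1) =ᵐ[σ]
            fun _ => (0:ℂ) := by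
          filter_upwards [φm.coeFn_toLp] with t ht
          rw [ht, mul_one, div_eq_mul_inv, sub_self]
        rw [integral_congr_ae hh, integral_zero]
      have f3 : ∫ t : ℝ, conj ((φm.toLp _) t) * z₁ t ∂σ
          = ∫ t : ℝ, ((t:ℂ)*((1:ℂ)+(t:ℂ)^2)⁻¹) * ((t:ℂ) * y₁ t - Γ₀ ⟨y₀, hy₀⟩) ∂σ := by
        refine integral_congr_ae ?_
        filter_upwards [φm.coeFn_toLp, hz₁ae] with t h1 h2
        rw [h1, h2, map_mul, Complex.conj_ofReal, winv_conj]
      rw [f1, f2, f3, hxb0, hxb1] at hEb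
      have h9b : ⟪(A.adjoint xb : H), y₀⟫_ℂ = ⟪((xb : H)), z₀⟫_ℂ - Γ₁ ⟨y₀, hy₀⟩ := by
        have hg := green xb ⟨y₀, hy₀⟩
        rw [hco, hz₀, hxb0, hxb1] at hg
        simp only [map_one, _root_.map_zero, one_mul, zero_mul, mul_one, mul_zero,
          sub_zero, add_zero] at hg
        linear_combination hg
      have hI1' : Integrable (fun t : ℝ => ((1:ℂ)+(t:ℂ)^2)⁻¹ * y₁ t) σ :=
        integrable_mul_L2 (winv_memL2 hσ) (Lp.memLp y₁)
      have hI2' : Integrable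
          (fun t : ℝ => ((t:ℂ)*((1:ℂ)+(t:ℂ)^2)⁻¹) * ((t:ℂ) * y₁ t - Γ₀ ⟨y₀, hy₀⟩)) σ :=
        integrable_mul_L2 (phi_memL2 hσ) hmemy
      have hsum : (∫ t : ℝ, ((1:ℂ)+(t:ℂ)^2)⁻¹ * y₁ t ∂σ)
          + (∫ t : ℝ, ((t:ℂ)*((1:ℂ)+(t:ℂ)^2)⁻¹) * ((t:ℂ) * y₁ t - Γ₀ ⟨y₀, hy₀⟩) ∂σ)
          = ∫ t : ℝ, (y₁ t - ((t:ℂ) / (1 + (t:ℂ)^2)) * Γ₀ ⟨y₀, hy₀⟩) ∂σ := by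
        rw [← integral_add hI1' hI2']
        refine integral_congr_ae (Filter.Eventually.of_forall fun t => ?_)
        have hne := one_add_sq_ne t
        field_simp
        ring
      have hcj1 : conj ((0:ℂ) + (h:ℂ) * 1 + 0) = (h:ℂ) := by
        simp [Complex.conj_ofReal]
      have hcj2 : conj (-(h₀:ℂ)) * z₂ / (h₀:ℂ) = -z₂ := by
        rw [_root_.map_neg, Complex.conj_ofReal, neg_mul, neg_div, mul_comm,
          mul_div_assoc, div_self hh₀c, mul_one]
      rw [hcj1, hcj2, h9b] at hEb
      have hEb' : -Γ₁ ⟨y₀, hy₀⟩ - (∫ t : ℝ, ((1:ℂ)+(t:ℂ)^2)⁻¹ * y₁ t ∂σ)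
          + (h:ℂ) * y₂ / (h₀:ℂ)
          = (∫ t : ℝ, ((t:ℂ)*((1:ℂ)+(t:ℂ)^2)⁻¹) * ((t:ℂ) * y₁ t - Γ₀ ⟨y₀, hy₀⟩) ∂σ)
            - z₂ := by linear_combination hEb
      have hhy : (h:ℂ) * y₂ / (h₀:ℂ) = -(h:ℂ) * Γ₀ ⟨y₀, hy₀⟩ := by
        rw [mul_div_assoc, hy₂div]
        ring
      rw [hhy] at hEb'
      linear_combination hEb' + hsum
    exact ⟨hy₀, hmemy, hy₂, hz₀.symm, hz₁ae, hz₂⟩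
  · rintro ⟨hy₀, hmemy, hy₂, hz₀, hz₁, hz₂⟩
    intro x₀ hx₀ x₁ x₂ hxmem hx₂
    have hcox : ((⟨x₀, hx₀⟩ : A.adjoint.domain) : H) = x₀ := rfl
    have hcoy : ((⟨y₀, hy₀⟩ : A.adjoint.domain) : H) = y₀ := rfl
    have hIx' : Integrable
        (fun t : ℝ => x₁ t - ((t:ℂ)/(1+(t:ℂ)^2)) * Γ₀ ⟨x₀, hx₀⟩) σ := by
      refine (key_integrable hσ (Lp.memLp x₁) hxmem).congr
        (Filter.Eventually.of_forall fun t => ?_)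
      simp only [div_eq_mul_inv]
    have hIy' : Integrable
        (fun t : ℝ => y₁ t - ((t:ℂ)/(1+(t:ℂ)^2)) * Γ₀ ⟨y₀, hy₀⟩) σ := by
      refine (key_integrable hσ (Lp.memLp y₁) hmemy).congr
        (Filter.Eventually.of_forall fun t => ?_)
      simp only [div_eq_mul_inv]
    have hI1 : Integrable (fun t : ℝ => conj ((t:ℂ) * x₁ t - Γ₀ ⟨x₀, hx₀⟩) * y₁ t) σ :=
      integrable_conj_mul hxmem (Lp.memLp y₁)
    have hI2 : Integrable (fun t : ℝ => conj (x₁ t) * ((t:ℂ) * y₁ t - Γ₀ ⟨y₀, hy₀⟩)) σ :=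
      integrable_conj_mul (Lp.memLp x₁) hmemy
    have hI3 : Integrable (fun t : ℝ =>
        conj (x₁ t - ((t:ℂ)/(1+(t:ℂ)^2)) * Γ₀ ⟨x₀, hx₀⟩) * Γ₀ ⟨y₀, hy₀⟩) σ :=
      (integrable_conj hIx').mul_const (Γ₀ ⟨y₀, hy₀⟩)
    have hI4 : Integrable (fun t : ℝ =>
        conj (Γ₀ ⟨x₀, hx₀⟩) * (y₁ t - ((t:ℂ)/(1+(t:ℂ)^2)) * Γ₀ ⟨y₀, hy₀⟩)) σ :=
      hIy'.const_mul (conj (Γ₀ ⟨x₀, hx₀⟩))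
    have hkey : (∫ t : ℝ, conj ((t:ℂ) * x₁ t - Γ₀ ⟨x₀, hx₀⟩) * y₁ t ∂σ)
        - (∫ t : ℝ, conj (x₁ t) * ((t:ℂ) * y₁ t - Γ₀ ⟨y₀, hy₀⟩) ∂σ)
        = conj (∫ t : ℝ, (x₁ t - ((t:ℂ)/(1+(t:ℂ)^2)) * Γ₀ ⟨x₀, hx₀⟩) ∂σ) * Γ₀ ⟨y₀, hy₀⟩
          - conj (Γ₀ ⟨x₀, hx₀⟩)
            * ∫ t : ℝ, (y₁ t - ((t:ℂ)/(1+(t:ℂ)^2)) * Γ₀ ⟨y₀, hy₀⟩) ∂σ := by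
      calc (∫ t : ℝ, conj ((t:ℂ) * x₁ t - Γ₀ ⟨x₀, hx₀⟩) * y₁ t ∂σ)
          - (∫ t : ℝ, conj (x₁ t) * ((t:ℂ) * y₁ t - Γ₀ ⟨y₀, hy₀⟩) ∂σ)
          = ∫ t : ℝ, (conj ((t:ℂ) * x₁ t - Γ₀ ⟨x₀, hx₀⟩) * y₁ t
              - conj (x₁ t) * ((t:ℂ) * y₁ t - Γ₀ ⟨y₀, hy₀⟩)) ∂σ :=
            (integral_sub hI1 hI2).symm
        _ = ∫ t : ℝ, (conj (x₁ t - ((t:ℂ)/(1+(t:ℂ)^2)) * Γ₀ ⟨x₀, hx₀⟩) * Γ₀ ⟨y₀, hy₀⟩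
              - conj (Γ₀ ⟨x₀, hx₀⟩)
                * (y₁ t - ((t:ℂ)/(1+(t:ℂ)^2)) * Γ₀ ⟨y₀, hy₀⟩)) ∂σ := by
            refine integral_congr_ae (Filter.Eventually.of_forall fun t => ?_)
            simp only [_root_.map_sub, _root_.map_mul, Complex.conj_ofReal, phiv_conj]
            ring
        _ = (∫ t : ℝ, conj (x₁ t - ((t:ℂ)/(1+(t:ℂ)^2)) * Γ₀ ⟨x₀, hx₀⟩) ∂σ) * Γ₀ ⟨y₀, hy₀⟩
              - conj (Γ₀ ⟨x₀, hx₀⟩)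
                * ∫ t : ℝ, (y₁ t - ((t:ℂ)/(1+(t:ℂ)^2)) * Γ₀ ⟨y₀, hy₀⟩) ∂σ := by
            rw [integral_sub hI3 hI4, integral_mul_const, integral_const_mul]
        _ = _ := by rw [integral_conj]
    have ez : ∫ t : ℝ, conj (x₁ t) * z₁ t ∂σ
        = ∫ t : ℝ, conj (x₁ t) * ((t:ℂ) * y₁ t - Γ₀ ⟨y₀, hy₀⟩) ∂σ := by
      refine integral_congr_ae ?_
      filter_upwards [hz₁] with t ht
      rw [ht]
    have hGr : ⟪(A.adjoint ⟨x₀, hx₀⟩ : H), y₀⟫_ℂ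
        = ⟪x₀, (A.adjoint ⟨y₀, hy₀⟩ : H)⟫_ℂ
          + conj (Γ₁ ⟨x₀, hx₀⟩) * Γ₀ ⟨y₀, hy₀⟩ - conj (Γ₀ ⟨x₀, hx₀⟩) * Γ₁ ⟨y₀, hy₀⟩ := by
      have hg := green ⟨x₀, hx₀⟩ ⟨y₀, hy₀⟩
      rw [hcox, hcoy] at hg
      exact hg
    have hdiv1 : conj (Γ₁ ⟨x₀, hx₀⟩ + (h:ℂ) * Γ₀ ⟨x₀, hx₀⟩ +
          ∫ t : ℝ, (x₁ t - ((t:ℂ)/(1+(t:ℂ)^2)) * Γ₀ ⟨x₀, hx₀⟩) ∂σ) * y₂ / (h₀:ℂ)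
        = -(conj (Γ₁ ⟨x₀, hx₀⟩ + (h:ℂ) * Γ₀ ⟨x₀, hx₀⟩ +
            ∫ t : ℝ, (x₁ t - ((t:ℂ)/(1+(t:ℂ)^2)) * Γ₀ ⟨x₀, hx₀⟩) ∂σ) * Γ₀ ⟨y₀, hy₀⟩) := by
      rw [hy₂]
      field_simp
    have hdiv2 : conj x₂ * z₂ / (h₀:ℂ) = -(conj (Γ₀ ⟨x₀, hx₀⟩) * z₂) := by
      rw [hx₂]
      simp only [_root_.map_neg, _root_.map_mul, Complex.conj_ofReal]
      field_simp
    rw [hdiv1, hdiv2, ez, hGr, hz₀, hz₂]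
    have hconjB : conj (Γ₁ ⟨x₀, hx₀⟩ + (h:ℂ) * Γ₀ ⟨x₀, hx₀⟩ +
          ∫ t : ℝ, (x₁ t - ((t:ℂ)/(1+(t:ℂ)^2)) * Γ₀ ⟨x₀, hx₀⟩) ∂σ)
        = conj (Γ₁ ⟨x₀, hx₀⟩) + (h:ℂ) * conj (Γ₀ ⟨x₀, hx₀⟩) +
          conj (∫ t : ℝ, (x₁ t - ((t:ℂ)/(1+(t:ℂ)^2)) * Γ₀ ⟨x₀, hx₀⟩) ∂σ) := by
      simp only [_root_.map_add, _root_.map_mul, Complex.conj_ofReal]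
    rw [hconjB]
    linear_combination hkey
end

section
/- In the setting of the construction with h₀ > 0, suppose ỹ = (y₀, y₁, y₂) ∈ D(Ã) satisfies (à − λ)ỹ = (x, 0, 0) for some x ∈ H and λ ∈ ℂ \ ℝ. Then y₁(t) = Γ₀y₀/(t − λ) in L²(ℝ, dσ), and y₀ satisfies A*y₀ − λy₀ = x together with the boundary condition Γ₁y₀ + f(λ)·Γ₀y₀ = 0, where f(λ) = h₀λ + h + ∫ (1/(t−λ) − t/(1+t²)) dσ(t). -/
open MeasureTheory LinearPMap
open scoped InnerProductSpace ComplexConjugate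

/-- (case `h₀ > 0`) if `ỹ = (y₀, y₁, y₂) ∈ D(Ã)` satisfies
`(Ã − λ)ỹ = (x, 0, 0)` with `λ` non-real, then `y₁(t) = Γ₀y₀/(t − λ)` in `L²(ℝ, dσ)`, and
`y₀` satisfies `A*y₀ − λy₀ = x` and the boundary condition `Γ₁y₀ + f(λ)Γ₀y₀ = 0`, where
`f(λ) = h₀λ + h + ∫(1/(t−λ) − t/(1+t²))dσ(t)`. -/
theorem resolvent_satisfies_boundary_condition
    {H : Type*} [NormedAddCommGroup H] [InnerProductSpace ℂ H] [CompleteSpace H]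
    [TopologicalSpace.SeparableSpace H]
    (A : H →ₗ.[ℂ] H) (hdense : Dense (A.domain : Set H)) (hclosed : A.IsClosed)
    (hsym : A ≤ A.adjoint)
    (Γ₀ Γ₁ : A.adjoint.domain →ₗ[ℂ] ℂ)
    (hGreen : ∀ x y : A.adjoint.domain,
      ⟪(A.adjoint x : H), (y : H)⟫_ℂ - ⟪(x : H), (A.adjoint y : H)⟫_ℂ =
        conj (Γ₁ x) * Γ₀ y - conj (Γ₀ x) * Γ₁ y)
    (hsurj : Function.Surjective (fun x : A.adjoint.domain => (Γ₀ x, Γ₁ x)))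
    (σ : Measure ℝ) (hσ : Integrable (fun t : ℝ => (1 + t ^ 2)⁻¹) σ)
    (h₀ h : ℝ) (hh₀ : 0 < h₀)
    (x y₀ : H) (hy₀ : y₀ ∈ A.adjoint.domain) (y₁ : Lp ℂ 2 σ) (y₂ : ℂ)
    (lam : ℂ) (hlam : lam.im ≠ 0)
    -- ỹ ∈ D(Ã):
    (hdom : MemLp (fun t : ℝ => (t : ℂ) * y₁ t - Γ₀ ⟨y₀, hy₀⟩) 2 σ)
    (hy₂ : y₂ = -(h₀ : ℂ) * Γ₀ ⟨y₀, hy₀⟩)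
    -- (Ã − λ)ỹ = (x, 0, 0):
    (hres₀ : (A.adjoint ⟨y₀, hy₀⟩ : H) - lam • y₀ = x)
    (hres₁ : ∀ᵐ (t : ℝ) ∂σ, ((t : ℂ) * y₁ t - Γ₀ ⟨y₀, hy₀⟩) - lam * y₁ t = 0)
    (hres₂ : (Γ₁ ⟨y₀, hy₀⟩ + (h : ℂ) * Γ₀ ⟨y₀, hy₀⟩ +
        ∫ t : ℝ, (y₁ t - ((t : ℂ) / (1 + (t : ℂ) ^ 2)) * Γ₀ ⟨y₀, hy₀⟩) ∂σ) - lam * y₂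
        = 0) :
    (∀ᵐ (t : ℝ) ∂σ, y₁ t = Γ₀ ⟨y₀, hy₀⟩ / ((t : ℂ) - lam)) ∧
    (A.adjoint ⟨y₀, hy₀⟩ : H) - lam • y₀ = x ∧
    Γ₁ ⟨y₀, hy₀⟩ +
      ((h₀ : ℂ) * lam + (h : ℂ) +
        ∫ t : ℝ, (1 / ((t : ℂ) - lam) - (t : ℂ) / (1 + (t : ℂ) ^ 2)) ∂σ) *
        Γ₀ ⟨y₀, hy₀⟩ = 0 := by
  set c : ℂ := Γ₀ ⟨y₀, hy₀⟩ with hc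
  have hne : ∀ t : ℝ, (t : ℂ) - lam ≠ 0 := by
    intro t h'
    apply hlam
    have := congrArg Complex.im h'
    simpa using this.symm
  have h1 : ∀ᵐ (t : ℝ) ∂σ, y₁ t = c / ((t : ℂ) - lam) := by
    filter_upwards [hres₁] with t ht
    have : ((t : ℂ) - lam) * y₁ t = c := by linear_combination ht
    rw [eq_div_iff (hne t)]
    linear_combination this
  refine ⟨h1, hres₀, ?_⟩
  have hint : (∫ t : ℝ, (y₁ t - ((t : ℂ) / (1 + (t : ℂ) ^ 2)) * c) ∂σ)
      = c * ∫ t : ℝ, (1 / ((t : ℂ) - lam) - (t : ℂ) / (1 + (t : ℂ) ^ 2)) ∂σ := by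
    rw [← integral_const_mul]
    refine integral_congr_ae ?_
    filter_upwards [h1] with t ht
    rw [ht]; ring
  rw [hy₂] at hres₂
  rw [hint] at hres₂
  linear_combination hres₂
end

section
/- In the setting of the construction, the extension à acts in H itself (H̃ = H, i.e., the auxiliary summands vanish) if and only if h₀ = 0 and σ = 0, which holds if and only if the associated Herglotz–Nevanlinna function f(λ) = h₀λ + h + ∫ (1/(t−λ) − t/(1+t²)) dσ(t) is a real constant. -/
open MeasureTheory Complex

/-- the extension `Ã` acts in `H` itself (the auxiliary summands
`L²(ℝ, dσ)` and — when `h₀ > 0` — `ℂ` vanish) iff `h₀ = 0` and `σ = 0`, iff the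
Herglotz–Nevanlinna function `f(λ) = h₀λ + h + ∫(1/(t−λ) − t/(1+t²))dσ` is a real constant. -/
theorem canonical_extension_iff_real_constant (σ : Measure ℝ) (h₀ h : ℝ) (hh₀ : 0 ≤ h₀)
    (hσ : Integrable (fun t : ℝ => (1 + t ^ 2)⁻¹) σ) :
    ((h₀ = 0 ∧ Subsingleton (Lp ℂ 2 σ)) ↔ (h₀ = 0 ∧ σ = 0)) ∧
    ((h₀ = 0 ∧ σ = 0) ↔
      ∃ c : ℝ, ∀ lam : ℂ, 0 < lam.im →
        (h₀ : ℂ) * lam + (h : ℂ) +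
          ∫ t : ℝ, (1 / ((t : ℂ) - lam) - (t : ℂ) / (1 + (t : ℂ) ^ 2)) ∂σ = (c : ℂ)) := by
  -- basic positivity facts
  have hpos : ∀ t : ℝ, (0 : ℝ) < 1 + t ^ 2 := fun t => by positivity
  constructor
  · -- first iff
    constructor
    · rintro ⟨h0, hsub⟩
      refine ⟨h0, ?_⟩
      -- the function t ↦ (1+t²)⁻¹ (as a complex-valued function) is in L²
      set g : ℝ → ℂ := fun t => ((1 + t ^ 2 : ℝ)⁻¹ : ℝ) with hg
      have hmeas : AEStronglyMeasurable g σ := by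
        apply Continuous.aestronglyMeasurable
        exact Complex.continuous_ofReal.comp
          ((continuous_const.add (continuous_pow 2)).inv₀ fun t => ne_of_gt (hpos t))
      have hint : Integrable (fun t : ℝ => ‖g t‖ ^ 2) σ := by
        refine hσ.mono ?_ (Filter.Eventually.of_forall fun t => ?_)
        · exact (hmeas.norm.pow 2)
        · have h1 : ‖g t‖ = (1 + t ^ 2)⁻¹ := by
            rw [hg]
            simp only [Complex.norm_real, Real.norm_eq_abs]
            exact abs_of_pos (inv_pos.mpr (hpos t))
          have h2 : (1 + t ^ 2)⁻¹ ≤ 1 := by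
            rw [inv_le_one_iff₀]; right; nlinarith [sq_nonneg t]
          have h3 : (0:ℝ) ≤ (1 + t ^ 2)⁻¹ := le_of_lt (inv_pos.mpr (hpos t))
          rw [Real.norm_eq_abs, Real.norm_eq_abs, h1,
            _root_.abs_of_nonneg (by positivity), _root_.abs_of_nonneg h3]
          nlinarith
      have hmem : MemLp g 2 σ := (memLp_two_iff_integrable_sq_norm hmeas).mpr hint
      have heq : hmem.toLp g = MemLp.toLp 0 (MemLp.zero (ε := ℂ) (p := 2) (μ := σ)) :=
        Subsingleton.elim _ _
      have hae : g =ᵐ[σ] 0 := (MemLp.toLp_eq_toLp_iff hmem MemLp.zero).mp heq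
      -- but g is nowhere zero, so σ = 0
      by_contra hσ0
      have huniv : 0 < σ Set.univ := by
        rcases (Measure.measure_univ_eq_zero (μ := σ)).not.mpr hσ0 with h'
        exact lt_of_le_of_ne zero_le (Ne.symm h')
      have : σ {t : ℝ | g t ≠ 0} = 0 := by
        have := hae
        rw [Filter.EventuallyEq, ae_iff] at this
        simpa using this
      have : σ Set.univ = 0 := by
        convert this using 2
        ext t
        simp only [Set.mem_univ, Set.mem_setOf_eq, true_iff, hg]
        exact_mod_cast (ne_of_gt (inv_pos.mpr (hpos t)))
      exact absurd this (ne_of_gt huniv)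
    · rintro ⟨h0, rfl⟩
      refine ⟨h0, ⟨fun a b => ?_⟩⟩
      apply Lp.ext
      simp [Filter.EventuallyEq]
  · -- second iff
    constructor
    · rintro ⟨h0, rfl⟩
      exact ⟨h, fun lam _ => by simp [h0]⟩
    · rintro ⟨c, hc⟩
      -- evaluate at λ = I : the integrand is exactly I/(1+t²)
      have hkey : ∀ t : ℝ, 1 / ((t : ℂ) - Complex.I) - (t : ℂ) / (1 + (t : ℂ) ^ 2)
          = Complex.I * (((1 + t ^ 2 : ℝ) : ℂ))⁻¹ := by
        intro t
        have h1 : (t : ℂ) - Complex.I ≠ 0 := by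
          intro hc'
          have := congrArg Complex.im hc'
          simp at this
        have h2 : (1 : ℂ) + (t : ℂ) ^ 2 ≠ 0 := by
          have : ((1 + t ^ 2 : ℝ) : ℂ) ≠ 0 := by
            exact_mod_cast (by positivity : (1 + t ^ 2 : ℝ) ≠ 0)
          push_cast at this ⊢
          convert this using 2 <;> ring_nf
        push_cast
        field_simp
        ring_nf
        simp only [Complex.I_sq]
        ring_nf
      have hI : (∫ t : ℝ, (1 / ((t : ℂ) - Complex.I) - (t : ℂ) / (1 + (t : ℂ) ^ 2)) ∂σ)
          = Complex.I * ((∫ t : ℝ, (1 + t ^ 2)⁻¹ ∂σ : ℝ) : ℂ) := by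
        calc (∫ t : ℝ, (1 / ((t : ℂ) - Complex.I) - (t : ℂ) / (1 + (t : ℂ) ^ 2)) ∂σ)
            = ∫ t : ℝ, Complex.I * (((1 + t ^ 2 : ℝ) : ℂ))⁻¹ ∂σ := by
              exact integral_congr_ae (Filter.Eventually.of_forall fun t => hkey t)
          _ = Complex.I * ∫ t : ℝ, (((1 + t ^ 2 : ℝ) : ℂ))⁻¹ ∂σ := integral_const_mul _ _
          _ = Complex.I * ((∫ t : ℝ, (1 + t ^ 2)⁻¹ ∂σ : ℝ) : ℂ) := by
              congr 1
              simp only [← Complex.ofReal_inv]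
              exact integral_ofReal
      have heval := hc Complex.I (by simp)
      rw [hI] at heval
      set r : ℝ := ∫ t : ℝ, (1 + t ^ 2)⁻¹ ∂σ with hr
      have him : h₀ + r = 0 := by
        have := congrArg Complex.im heval
        simpa using this
      have hrnn : 0 ≤ r := integral_nonneg fun t => le_of_lt (inv_pos.mpr (hpos t))
      have h0 : h₀ = 0 := le_antisymm (by linarith) hh₀
      have hr0 : r = 0 := by linarith
      refine ⟨h0, ?_⟩
      -- integral of everywhere-positive integrable function is 0 ⇒ σ = 0
      by_contra hσ0
      have huniv : 0 < σ (Function.support fun t : ℝ => (1 + t ^ 2)⁻¹) := by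
        have hs : (Function.support fun t : ℝ => (1 + t ^ 2)⁻¹) = Set.univ := by
          ext t
          simp only [Function.mem_support, Set.mem_univ, iff_true]
          exact ne_of_gt (inv_pos.mpr (hpos t))
        rw [hs]
        have h' := (Measure.measure_univ_eq_zero (μ := σ)).not.mpr hσ0
        exact lt_of_le_of_ne zero_le (Ne.symm h')
      have : 0 < r := by
        rw [hr]
        exact (integral_pos_iff_support_of_nonneg
          (fun t => le_of_lt (inv_pos.mpr (hpos t))) hσ).mpr huniv
      linarith
end
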